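/- arXiv:1102.2035 — 12 statements merged into one kernel-verified Lean document; each statement's English description precedes it below -/
import Mathlib

section
/- Let p be a prime and let k₊, k₋ be integers with 0 < k₋ < k₊ and k₊ + k₋ = p - 1, and set M = [-k₋, k₊]*. For each ℓ ≥ 1 define Sℓ ⊆ ℤ/p^ℓℤ recursively by S₁ = {1} and S_{i+1} = p·S_i ∪ {s ∈ ℤ/p^{i+1}ℤ : s ≡ 1 (mod p)}, where p·S_i denotes the image of S_i under the map ℤ/p^iℤ → ℤ/p^{i+1}ℤ sending the residue of x to the residue of p·x. Then M and S_ℓ split ℤ/p^ℓℤ, and |S_ℓ| = (p^ℓ - 1)/(p - 1). -/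
/-- `M` and `S` split the additive abelian group `G`: the map `(m, s) ↦ m • s`
is a bijection from `M × S` onto `G \ {0}`. -/
def Splits {G : Type*} [AddCommGroup G] (M : Set ℤ) (S : Set G) : Prop :=
  Set.BijOn (fun p : ℤ × G => p.1 • p.2) (M ×ˢ S) {g : G | g ≠ 0}

/-- The recursively defined splitter sets: `splitterSet p ℓ` is the set `S_{ℓ+1} ⊆ ℤ/p^{ℓ+1}ℤ`,
with `S₁ = {1}` and
`S_{i+1} = p·S_i ∪ {s ∈ ℤ/p^{i+1}ℤ : s ≡ 1 (mod p)}`, where `p·S_i` is the image of `S_i`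
under the map sending the residue of `x` to the residue of `p·x`. -/
def splitterSet (p : ℕ) : (ℓ : ℕ) → Set (ZMod (p ^ (ℓ + 1)))
  | 0 => {1}
  | i + 1 =>
      (fun x : ZMod (p ^ (i + 1)) => ((p * x.val : ℕ) : ZMod (p ^ (i + 2)))) '' splitterSet p i
        ∪ {s : ZMod (p ^ (i + 2)) | s.val % p = 1}

namespace SplitAux

def Mset (km kp : ℤ) : Set ℤ := {m : ℤ | -km ≤ m ∧ m ≤ kp ∧ m ≠ 0}

variable {p : ℕ} {kp km : ℤ}

lemma not_dvd_of_mem (hp : p.Prime) (h0 : 0 < km) (hlt : km < kp)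
    (hsum : kp + km = (p : ℤ) - 1) {m : ℤ} (hm : m ∈ Mset km kp) : ¬ (p : ℤ) ∣ m := by
  intro hd
  obtain ⟨h1, h2, h3⟩ := hm
  have hp2 : (2 : ℤ) ≤ p := by exact_mod_cast hp.two_le
  exact h3 (Int.eq_zero_of_abs_lt_dvd hd (by rw [abs_lt]; omega))

lemma isUnit_cast (hp : p.Prime) {m : ℤ} (hnd : ¬ (p : ℤ) ∣ m) (j : ℕ) [NeZero (p ^ j)] :
    IsUnit (m : ZMod (p ^ j)) := by
  have h1 : ¬ p ∣ m.natAbs := fun h => hnd (Int.natCast_dvd.mpr h)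
  have h2 : Nat.Coprime m.natAbs (p ^ j) :=
    Nat.Coprime.pow_right _ ((Nat.Prime.coprime_iff_not_dvd hp).mpr h1).symm
  have h3 : IsUnit ((m.natAbs : ℕ) : ZMod (p ^ j)) := (ZMod.isUnit_iff_coprime _ _).mpr h2
  rcases Int.natAbs_eq m with h | h
  · rw [h, Int.cast_natCast]; exact h3
  · rw [h, Int.cast_neg, Int.cast_natCast]; exact h3.neg

lemma M_cast_inj (hp : p.Prime) (h0 : 0 < km) (hlt : km < kp)
    (hsum : kp + km = (p : ℤ) - 1) {m₁ m₂ : ℤ} (h1 : m₁ ∈ Mset km kp) (h2 : m₂ ∈ Mset km kp)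
    (h : (m₁ : ZMod p) = (m₂ : ZMod p)) : m₁ = m₂ := by
  have hd : (p : ℤ) ∣ m₂ - m₁ := Int.ModEq.dvd ((ZMod.intCast_eq_intCast_iff _ _ _).mp h)
  obtain ⟨a1, b1, c1⟩ := h1
  obtain ⟨a2, b2, c2⟩ := h2
  have hp2 : (2 : ℤ) ≤ p := by exact_mod_cast hp.two_le
  have := Int.eq_zero_of_abs_lt_dvd hd (by rw [abs_lt]; omega)
  omega

lemma M_cast_surj (hp : p.Prime) (h0 : 0 < km) (hlt : km < kp)
    (hsum : kp + km = (p : ℤ) - 1) {a : ZMod p} (ha : a ≠ 0) :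
    ∃ m ∈ Mset km kp, (m : ZMod p) = a := by
  haveI : NeZero p := ⟨hp.ne_zero⟩
  have hvpos : 0 < a.val := Nat.pos_of_ne_zero fun h => ha (by
    have := congrArg (Nat.cast : ℕ → ZMod p) h
    rwa [ZMod.natCast_val, ZMod.cast_id, Nat.cast_zero] at this)
  have hvlt : a.val < p := a.val_lt
  have hp2 : (2 : ℤ) ≤ p := by exact_mod_cast hp.two_le
  have hcast : (((a.val : ℤ)) : ZMod p) = a := by
    push_cast
    rw [ZMod.natCast_val, ZMod.cast_id]
  by_cases hc : (a.val : ℤ) ≤ kp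
  · exact ⟨(a.val : ℤ), ⟨by omega, hc, by omega⟩, hcast⟩
  · refine ⟨(a.val : ℤ) - p, ⟨by omega, by omega, by omega⟩, ?_⟩
    rw [Int.cast_sub, hcast, Int.cast_natCast, ZMod.natCast_self, sub_zero]

/-! ### The maps `phi` and `psi` -/

def phi (p i : ℕ) (x : ZMod (p ^ (i + 1))) : ZMod (p ^ (i + 2)) :=
  ((p * x.val : ℕ) : ZMod (p ^ (i + 2)))

variable [NeZero p]

lemma val_phi (i : ℕ) (x : ZMod (p ^ (i + 1))) : (phi p i x).val = p * x.val := by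
  apply ZMod.val_cast_of_lt
  have h1 : x.val < p ^ (i + 1) := x.val_lt
  calc p * x.val < p * p ^ (i + 1) := by
        exact Nat.mul_lt_mul_of_pos_left h1 (NeZero.pos p)
    _ = p ^ (i + 2) := by ring

lemma phi_inj (i : ℕ) : Function.Injective (phi p i) := by
  intro x y h
  have := congrArg ZMod.val h
  rw [val_phi, val_phi] at this
  exact ZMod.val_injective _ (Nat.eq_of_mul_eq_mul_left (NeZero.pos p) this)

lemma phi_zero (i : ℕ) : phi p i 0 = 0 := by
  simp [phi]

lemma phi_zsmul (i : ℕ) (m : ℤ) (x : ZMod (p ^ (i + 1))) :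
    phi p i (m • x) = m • phi p i x := by
  set y := m • x with hy
  have h1 : ((y.val : ℤ) : ZMod (p ^ (i + 1))) =
      ((m * (x.val : ℤ) : ℤ) : ZMod (p ^ (i + 1))) := by
    rw [Int.cast_natCast, ZMod.natCast_val, ZMod.cast_id, Int.cast_mul, Int.cast_natCast,
      ZMod.natCast_val, ZMod.cast_id, hy, zsmul_eq_mul]
  have h2 := (ZMod.intCast_eq_intCast_iff _ _ _).mp h1
  have h3 := h2.mul_left' (c := (p : ℤ))
  have hmod : ((p : ℤ) * ((p ^ (i + 1) : ℕ) : ℤ)) = ((p ^ (i + 2) : ℕ) : ℤ) := by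
    push_cast; ring
  rw [hmod] at h3
  have h4 : (p : ℤ) * ((m : ℤ) * (x.val : ℤ)) = m * ((p : ℤ) * (x.val : ℤ)) := by ring
  rw [h4] at h3
  show ((p * y.val : ℕ) : ZMod (p ^ (i + 2))) = m • ((p * x.val : ℕ) : ZMod (p ^ (i + 2)))
  rw [zsmul_eq_mul]
  have l1 : ((p * y.val : ℕ) : ZMod (p ^ (i + 2))) =
      (((p : ℤ) * (y.val : ℤ) : ℤ) : ZMod (p ^ (i + 2))) := by
    push_cast; ring
  have l2 : ((m : ZMod (p ^ (i + 2))) * ((p * x.val : ℕ) : ZMod (p ^ (i + 2)))) =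
      ((m * ((p : ℤ) * (x.val : ℤ)) : ℤ) : ZMod (p ^ (i + 2))) := by
    push_cast; ring
  rw [l1, l2]
  exact (ZMod.intCast_eq_intCast_iff _ _ _).mpr h3

lemma phi_range (i : ℕ) {g : ZMod (p ^ (i + 2))} (h : p ∣ g.val) :
    ∃ x : ZMod (p ^ (i + 1)), phi p i x = g := by
  obtain ⟨t, ht⟩ := h
  have hglt : g.val < p ^ (i + 2) := g.val_lt
  have htlt : t < p ^ (i + 1) := by
    by_contra hcon
    push_neg at hcon
    have : p ^ (i + 2) ≤ p * t := by
      calc p ^ (i + 2) = p * p ^ (i + 1) := by ring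
        _ ≤ p * t := Nat.mul_le_mul_left _ hcon
    omega
  refine ⟨(t : ZMod (p ^ (i + 1))), ?_⟩
  show ((p * ((t : ZMod (p ^ (i + 1)))).val : ℕ) : ZMod (p ^ (i + 2))) = g
  rw [ZMod.val_natCast, Nat.mod_eq_of_lt htlt, ← ht, ZMod.natCast_val, ZMod.cast_id]

def psi (p k : ℕ) : ZMod (p ^ (k + 1)) →+* ZMod p :=
  ZMod.castHom (dvd_pow_self p (Nat.succ_ne_zero k)) (ZMod p)

lemma psi_eq (k : ℕ) (g : ZMod (p ^ (k + 1))) : psi p k g = ((g.val : ℕ) : ZMod p) := by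
  rw [psi, ZMod.castHom_apply, ← ZMod.natCast_val]

lemma psi_phi (i : ℕ) (x : ZMod (p ^ (i + 1))) : psi p (i + 1) (phi p i x) = 0 := by
  rw [psi_eq, val_phi]
  simp

lemma psi_eq_one_iff (hp1 : 1 < p) (k : ℕ) {g : ZMod (p ^ (k + 1))} :
    psi p k g = 1 ↔ g.val % p = 1 := by
  haveI : Fact (1 < p) := ⟨hp1⟩
  rw [psi_eq]
  constructor
  · intro h
    have := congrArg ZMod.val h
    rwa [ZMod.val_natCast, ZMod.val_one] at this
  · intro h
    rw [← ZMod.natCast_mod, h, Nat.cast_one]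

lemma psi_zero_iff (k : ℕ) {g : ZMod (p ^ (k + 1))} : psi p k g = 0 ↔ p ∣ g.val := by
  rw [psi_eq, ZMod.natCast_eq_zero_iff]

lemma psi_zero_inj : Function.Injective (psi p 0) := by
  intro a b h
  have ha : a.val < p := lt_of_lt_of_eq a.val_lt (pow_one p)
  have hb : b.val < p := lt_of_lt_of_eq b.val_lt (pow_one p)
  rw [psi_eq, psi_eq] at h
  have := congrArg ZMod.val h
  rw [ZMod.val_natCast, ZMod.val_natCast, Nat.mod_eq_of_lt ha, Nat.mod_eq_of_lt hb] at this
  exact ZMod.val_injective _ this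

end SplitAux

open SplitAux in
lemma splits_all {p : ℕ} {kp km : ℤ} (hp : p.Prime) (h0 : 0 < km) (hlt : km < kp)
    (hsum : kp + km = (p : ℤ) - 1) (ℓ : ℕ) : Splits (Mset km kp) (splitterSet p ℓ) := by
  haveI : NeZero p := ⟨hp.ne_zero⟩
  have hp1 : 1 < p := hp.one_lt
  induction ℓ with
  | zero =>
    refine ⟨?_, ?_, ?_⟩
    · rintro ⟨m, s⟩ ⟨hm, hs⟩
      have hs1 : s = 1 := hs
      subst hs1
      show m • (1 : ZMod (p ^ (0 + 1))) ≠ 0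
      intro hcon
      have h := congrArg (psi p 0) hcon
      rw [map_zsmul, map_one, zsmul_eq_mul, mul_one, map_zero] at h
      exact not_dvd_of_mem hp h0 hlt hsum hm
        ((ZMod.intCast_zmod_eq_zero_iff_dvd m p).mp h)
    · rintro ⟨m1, s1⟩ ⟨hm1, hs1⟩ ⟨m2, s2⟩ ⟨hm2, hs2⟩ heq
      have e1 : s1 = 1 := hs1
      have e2 : s2 = 1 := hs2
      subst e1; subst e2
      have heq' : m1 • (1 : ZMod (p ^ (0 + 1))) = m2 • (1 : ZMod (p ^ (0 + 1))) := heq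
      have h := congrArg (psi p 0) heq'
      rw [map_zsmul, map_zsmul, map_one, zsmul_eq_mul, mul_one, zsmul_eq_mul, mul_one] at h
      have em : m1 = m2 := M_cast_inj hp h0 hlt hsum hm1 hm2 h
      rw [em]
    · intro g hg
      have hg0 : g ≠ 0 := hg
      have hpsig : psi p 0 g ≠ 0 := fun h => hg0 (psi_zero_inj (by rw [h, map_zero]))
      obtain ⟨m, hm, hmc⟩ := M_cast_surj hp h0 hlt hsum hpsig
      refine ⟨(m, 1), ⟨hm, rfl⟩, ?_⟩
      show m • (1 : ZMod (p ^ (0 + 1))) = g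
      apply psi_zero_inj
      rw [map_zsmul, map_one, zsmul_eq_mul, mul_one]
      exact hmc
  | succ i ih =>
    obtain ⟨ihMap, ihInj, ihSurj⟩ := ih
    have hMuniq : ∀ {m : ℤ}, m ∈ Mset km kp → ((m : ZMod p) ≠ 0) := fun {m} hm h =>
      not_dvd_of_mem hp h0 hlt hsum hm ((ZMod.intCast_zmod_eq_zero_iff_dvd m p).mp h)
    have hSdef : splitterSet p (i + 1) = phi p i '' splitterSet p i
        ∪ {s : ZMod (p ^ (i + 2)) | s.val % p = 1} := rfl
    -- psi of elements of the two parts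
    have hpsi_smul_phi : ∀ (m : ℤ) (x : ZMod (p ^ (i+1))),
        psi p (i+1) (m • phi p i x) = 0 := by
      intro m x
      rw [map_zsmul, psi_phi, smul_zero]
    have hpsi_smul_res : ∀ (m : ℤ) {s : ZMod (p ^ (i+2))}, s.val % p = 1 →
        psi p (i+1) (m • s) = (m : ZMod p) := by
      intro m s hs
      rw [map_zsmul, (psi_eq_one_iff hp1 (i+1)).mpr hs, zsmul_eq_mul, mul_one]
    refine ⟨?_, ?_, ?_⟩
    · rintro ⟨m, s⟩ ⟨hm, hs⟩
      show m • s ≠ 0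
      rcases hs with ⟨x, hx, hxe⟩ | hs
      · have hse : s = phi p i x := hxe.symm
        subst hse
        rw [← phi_zsmul]
        intro hcon
        have hx0 : m • x = 0 := phi_inj i (by rw [hcon, phi_zero])
        have hmem : (m, x) ∈ Mset km kp ×ˢ splitterSet p i := ⟨hm, hx⟩
        exact ihMap hmem hx0
      · intro hcon
        have h := hpsi_smul_res m hs
        rw [hcon, map_zero] at h
        exact hMuniq hm h.symm
    · rintro ⟨m1, s1⟩ ⟨hm1, hs1⟩ ⟨m2, s2⟩ ⟨hm2, hs2⟩ heq
      have heq' : m1 • s1 = m2 • s2 := heq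
      have hm1' : m1 ∈ Mset km kp := hm1
      have hm2' : m2 ∈ Mset km kp := hm2
      rcases hs1 with ⟨x1, hx1, hxe1⟩ | hs1 <;> rcases hs2 with ⟨x2, hx2, hxe2⟩ | hs2
      · -- both phi
        have hse1 : s1 = phi p i x1 := hxe1.symm
        have hse2 : s2 = phi p i x2 := hxe2.symm
        subst hse1; subst hse2
        rw [← phi_zsmul, ← phi_zsmul] at heq'
        have hmem1 : (m1, x1) ∈ Mset km kp ×ˢ splitterSet p i := ⟨hm1', hx1⟩
        have hmem2 : (m2, x2) ∈ Mset km kp ×ˢ splitterSet p i := ⟨hm2', hx2⟩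
        have h : (m1, x1) = (m2, x2) := ihInj hmem1 hmem2 (phi_inj i heq')
        have em : m1 = m2 := congrArg Prod.fst h
        have ex : x1 = x2 := congrArg Prod.snd h
        rw [em, ex]
      · -- phi vs residue
        exfalso
        have hse1 : s1 = phi p i x1 := hxe1.symm
        subst hse1
        have h1 := hpsi_smul_phi m1 x1
        have h2 := hpsi_smul_res m2 hs2
        rw [heq', h2] at h1
        exact hMuniq hm2' h1
      · -- residue vs phi
        exfalso
        have hse2 : s2 = phi p i x2 := hxe2.symm
        subst hse2
        have h1 := hpsi_smul_phi m2 x2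
        have h2 := hpsi_smul_res m1 hs1
        rw [← heq', h2] at h1
        exact hMuniq hm1' h1
      · -- both residue
        have h1 := hpsi_smul_res m1 hs1
        have h2 := hpsi_smul_res m2 hs2
        have hmm : (m1 : ZMod p) = (m2 : ZMod p) := by rw [← h1, ← h2, heq']
        have em : m1 = m2 := M_cast_inj hp h0 hlt hsum hm1' hm2' hmm
        subst em
        have hu := isUnit_cast hp (not_dvd_of_mem hp h0 hlt hsum hm1') (i + 2)
        have es : s1 = s2 := by
          apply hu.mul_left_cancel
          rw [← zsmul_eq_mul, ← zsmul_eq_mul]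
          exact heq'
        rw [es]
    · intro g hg
      have hg0 : g ≠ 0 := hg
      by_cases hdvd : p ∣ g.val
      · obtain ⟨x, hxg⟩ := phi_range i hdvd
        have hx0 : x ≠ 0 := fun h => hg0 (by rw [← hxg, h, phi_zero])
        obtain ⟨⟨m, s⟩, ⟨hm, hs⟩, he⟩ := ihSurj hx0
        have he' : m • s = x := he
        refine ⟨(m, phi p i s), ⟨hm, Or.inl ⟨s, hs, rfl⟩⟩, ?_⟩
        show m • phi p i s = g
        rw [← phi_zsmul, he', hxg]
      · have hpsig : psi p (i + 1) g ≠ 0 := fun h => hdvd ((psi_zero_iff (i + 1)).mp h)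
        obtain ⟨m, hm, hmc⟩ := M_cast_surj hp h0 hlt hsum hpsig
        have hund := not_dvd_of_mem hp h0 hlt hsum hm
        obtain ⟨u, hu'⟩ := isUnit_cast hp hund (i + 2)
        refine ⟨(m, (↑u⁻¹ : ZMod (p ^ (i + 2))) * g), ⟨hm, Or.inr ?_⟩, ?_⟩
        · show ((↑u⁻¹ : ZMod (p ^ (i + 2))) * g).val % p = 1
          rw [← psi_eq_one_iff hp1 (i + 1)]
          have hpsiu : psi p (i + 1) (↑u : ZMod (p ^ (i + 2))) = psi p (i + 1) g := by
            rw [hu', map_intCast, hmc]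
          calc psi p (i + 1) ((↑u⁻¹ : ZMod (p ^ (i + 2))) * g)
              = psi p (i + 1) (↑u⁻¹) * psi p (i + 1) g := map_mul _ _ _
            _ = psi p (i + 1) (↑u⁻¹) * psi p (i + 1) (↑u) := by rw [hpsiu]
            _ = psi p (i + 1) ((↑u⁻¹ : ZMod (p ^ (i + 2))) * ↑u) := (map_mul _ _ _).symm
            _ = 1 := by rw [Units.inv_mul, map_one]
        · show m • ((↑u⁻¹ : ZMod (p ^ (i + 2))) * g) = g
          rw [zsmul_eq_mul, ← mul_assoc, ← hu', Units.mul_inv, one_mul]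

theorem stmt0 (p : ℕ) (hp : p.Prime) (kp km : ℤ) (h0 : 0 < km) (hlt : km < kp)
    (hsum : kp + km = (p : ℤ) - 1) (ℓ : ℕ) :
    Splits {m : ℤ | -km ≤ m ∧ m ≤ kp ∧ m ≠ 0} (splitterSet p ℓ) ∧
      Nat.card ↥(splitterSet p ℓ) = (p ^ (ℓ + 1) - 1) / (p - 1) := by
  have hsp := splits_all hp h0 hlt hsum ℓ
  refine ⟨hsp, ?_⟩
  haveI : NeZero p := ⟨hp.ne_zero⟩
  have hp2 : 2 ≤ p := hp.two_le
  have hp2' : (2 : ℤ) ≤ p := by exact_mod_cast hp2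
  -- card of M
  have hset : SplitAux.Mset km kp = ↑((Finset.Icc (-km) kp).erase 0) := by
    ext m
    simp only [SplitAux.Mset, Set.mem_setOf_eq, Finset.coe_erase, Set.mem_diff,
      Finset.mem_coe, Finset.mem_Icc, Set.mem_singleton_iff]
    tauto
  have e3 : Nat.card ↥(SplitAux.Mset km kp) = p - 1 := by
    rw [hset, Nat.card_coe_set_eq, Set.ncard_coe_finset,
      Finset.card_erase_of_mem (by rw [Finset.mem_Icc]; omega), Int.card_Icc]
    omega
  have e4 : Nat.card ↥{g : ZMod (p ^ (ℓ + 1)) | g ≠ 0} = p ^ (ℓ + 1) - 1 := by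
    rw [Nat.card_eq_fintype_card]
    have := Fintype.card_subtype_compl (fun g : ZMod (p ^ (ℓ + 1)) => g = 0)
    rw [ZMod.card, Fintype.card_subtype_eq] at this
    convert this using 2
    rfl
  have e1 : Nat.card ↥(SplitAux.Mset km kp ×ˢ splitterSet p ℓ) =
      Nat.card ↥{g : ZMod (p ^ (ℓ + 1)) | g ≠ 0} := Nat.card_congr (hsp.equiv _)
  have e2 : Nat.card ↥(SplitAux.Mset km kp ×ˢ splitterSet p ℓ) =
      Nat.card ↥(SplitAux.Mset km kp) * Nat.card ↥(splitterSet p ℓ) := by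
    rw [Nat.card_congr (Equiv.Set.prod _ _), Nat.card_prod]
  have key : (p - 1) * Nat.card ↥(splitterSet p ℓ) = p ^ (ℓ + 1) - 1 := by
    rw [← e3, ← e2, e1, e4]
  exact (Nat.div_eq_of_eq_mul_left (by omega) (by rw [← key, mul_comm])).symm
end

section
/- Let p be a prime and let k₊, k₋ be integers with 0 < k₋ < k₊ and k₊ + k₋ = p - 1, and set M = [-k₋, k₊]*. Let F be the finite field with p^ℓ elements (ℓ ≥ 1), let α ∈ F be a primitive element (a generator of the multiplicative group F*), and let S = {P(α) : P a monic polynomial over GF(p) of degree at most ℓ - 1}. Then M and S split the additive group of F. -/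
theorem stmt1 (p : ℕ) (hp : p.Prime) (kp km : ℤ) (h0 : 0 < km) (hlt : km < kp)
    (hsum : kp + km = (p : ℤ) - 1) (ℓ : ℕ) (hℓ : 1 ≤ ℓ)
    (F : Type*) [Field F] [Fintype F] [Algebra (ZMod p) F]
    (hF : Fintype.card F = p ^ ℓ)
    (α : F) (hα : ∀ x : F, x ≠ 0 → ∃ k : ℕ, α ^ k = x) :
    Splits {m : ℤ | -km ≤ m ∧ m ≤ kp ∧ m ≠ 0}
      {x : F | ∃ P : Polynomial (ZMod p), P.Monic ∧ P.natDegree ≤ ℓ - 1 ∧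
        Polynomial.aeval α P = x} := by
  haveI : Fact p.Prime := ⟨hp⟩
  have hint : IsIntegral (ZMod p) α := IsIntegral.of_finite (ZMod p) α
  have hadj : IntermediateField.adjoin (ZMod p) {α} = ⊤ := by
    rw [eq_top_iff]
    intro x _
    rcases eq_or_ne x 0 with rfl | hx
    · exact zero_mem _
    · obtain ⟨k, rfl⟩ := hα x hx
      exact pow_mem (IntermediateField.mem_adjoin_simple_self (ZMod p) α) k
  let e : IntermediateField.adjoin (ZMod p) ({α} : Set F) ≃ₐ[ZMod p] F :=
    (IntermediateField.equivOfEq hadj).trans IntermediateField.topEquiv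
  let pb : PowerBasis (ZMod p) F := (IntermediateField.adjoin.powerBasis hint).map e
  have hgen : pb.gen = α := by
    simp [pb, e, PowerBasis.map_gen]
  have hdim : pb.dim = ℓ := by
    have hcard := Module.card_fintype pb.basis
    rw [ZMod.card, Fintype.card_fin, hF] at hcard
    exact Nat.pow_right_injective hp.two_le hcard.symm
  let b : Module.Basis (Fin ℓ) (ZMod p) F := pb.basis.reindex (finCongr hdim)
  have hb : ∀ i : Fin ℓ, b i = α ^ (i : ℕ) := by
    intro i
    simp [b, Module.Basis.reindex_apply, PowerBasis.coe_basis, hgen]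
  -- injectivity of aeval on low-degree polynomials
  have hinj : ∀ Q : Polynomial (ZMod p), Q.natDegree < ℓ →
      Polynomial.aeval α Q = 0 → Q = 0 := by
    intro Q hQ h0'
    rw [Polynomial.aeval_eq_sum_range' hQ, ← Fin.sum_univ_eq_sum_range] at h0'
    have hz : ∀ i : Fin ℓ, Q.coeff i = 0 := by
      refine Fintype.linearIndependent_iff.mp b.linearIndependent
        (fun i => Q.coeff i) ?_
      simpa [hb] using h0'
    ext n
    rcases lt_or_ge n ℓ with h | h
    · simpa using hz ⟨n, h⟩
    · simp [Polynomial.coeff_eq_zero_of_natDegree_lt (lt_of_lt_of_le hQ h)]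
  -- representation of every element
  have hrep : ∀ x : F, ∃ Q : Polynomial (ZMod p), Q.natDegree < ℓ ∧
      Polynomial.aeval α Q = x := by
    intro x
    refine ⟨∑ i : Fin ℓ, Polynomial.C (b.repr x i) * Polynomial.X ^ (i : ℕ), ?_, ?_⟩
    · refine lt_of_le_of_lt (Polynomial.natDegree_sum_le_of_forall_le _ _
        fun i _ => ?_) (Nat.sub_lt (by omega) one_pos)
      exact (Polynomial.natDegree_C_mul_X_pow_le _ _).trans (Nat.le_sub_one_of_lt i.isLt)
    · rw [map_sum]
      simp only [map_mul, Polynomial.aeval_C, Polynomial.aeval_X_pow, ← Algebra.smul_def]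
      conv_rhs => rw [← b.sum_repr x]
      simp [hb]
  have hzsmul : ∀ (m : ℤ) (s : F), m • s = ((m : ZMod p)) • s := by
    intro m s
    rw [Algebra.smul_def ((m : ZMod p)) s, map_intCast, ← zsmul_eq_mul]
  have hmne : ∀ m : ℤ, -km ≤ m → m ≤ kp → m ≠ 0 → ((m : ZMod p) ≠ 0) := by
    intro m h1 h2 h3
    rw [Ne, ZMod.intCast_zmod_eq_zero_iff_dvd]
    intro hdvd
    rcases h3.lt_or_gt with hneg | hpos
    · have : (p : ℤ) ≤ -m := Int.le_of_dvd (by omega) (dvd_neg.mpr hdvd)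
      omega
    · have : (p : ℤ) ≤ m := Int.le_of_dvd hpos hdvd
      omega
  have hPne : ∀ P : Polynomial (ZMod p), P.Monic → P.natDegree ≤ ℓ - 1 →
      Polynomial.aeval α P ≠ 0 := by
    intro P hm hd h
    exact hm.ne_zero (hinj P (by omega) h)
  refine ⟨?_, ?_, ?_⟩
  · -- MapsTo
    rintro ⟨m, s⟩ ⟨⟨hm1, hm2, hm3⟩, P, hPm, hPd, rfl⟩
    simp only [Set.mem_setOf_eq]
    rw [hzsmul]
    exact smul_ne_zero (hmne m hm1 hm2 hm3) (hPne P hPm hPd)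
  · -- InjOn
    rintro ⟨m1, s1⟩ ⟨⟨hm1a, hm1b, hm1c⟩, P1, hP1m, hP1d, rfl⟩
      ⟨m2, s2⟩ ⟨⟨hm2a, hm2b, hm2c⟩, P2, hP2m, hP2d, rfl⟩ heq
    simp only at heq
    rw [hzsmul, hzsmul] at heq
    have key : (m1 : ZMod p) • P1 = (m2 : ZMod p) • P2 := by
      have h0' : Polynomial.aeval α ((m1 : ZMod p) • P1 - (m2 : ZMod p) • P2) = 0 := by
        rw [map_sub, map_smul, map_smul, heq, sub_self]
      have hdeg : ((m1 : ZMod p) • P1 - (m2 : ZMod p) • P2).natDegree < ℓ := by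
        refine lt_of_le_of_lt (Polynomial.natDegree_sub_le _ _) ?_
        have h1 := Polynomial.natDegree_smul_le ((m1 : ZMod p)) P1
        have h2 := Polynomial.natDegree_smul_le ((m2 : ZMod p)) P2
        omega
      exact sub_eq_zero.mp (hinj _ hdeg h0')
    have hm1ne := hmne m1 hm1a hm1b hm1c
    have hm2ne := hmne m2 hm2a hm2b hm2c
    have hC : Polynomial.C ((m1 : ZMod p)) * P1 = Polynomial.C ((m2 : ZMod p)) * P2 := by
      rw [← Polynomial.smul_eq_C_mul, ← Polynomial.smul_eq_C_mul]; exact key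
    have hnd : P1.natDegree = P2.natDegree := by
      have h := congrArg Polynomial.natDegree hC
      rwa [Polynomial.natDegree_C_mul hm1ne, Polynomial.natDegree_C_mul hm2ne] at h
    have hcoeff := congrArg (fun q => Polynomial.coeff q P1.natDegree) hC
    simp only [Polynomial.coeff_C_mul] at hcoeff
    rw [hP1m.coeff_natDegree, hnd, hP2m.coeff_natDegree, mul_one, mul_one] at hcoeff
    have hP : P1 = P2 := by
      apply mul_left_cancel₀ (Polynomial.C_ne_zero.mpr hm1ne)
      rw [hC, hcoeff]
    have hmm : m1 = m2 := by
      have hdvd : (p : ℤ) ∣ m2 - m1 := by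
        rw [← ZMod.intCast_zmod_eq_zero_iff_dvd]
        push_cast
        rw [hcoeff, sub_self]
      have := Int.eq_zero_of_abs_lt_dvd hdvd (by rw [abs_lt]; omega)
      omega
    simp [hmm, hP]
  · -- SurjOn
    intro x hx
    obtain ⟨Q, hQd, hQx⟩ := hrep x
    have hQ0 : Q ≠ 0 := by
      rintro rfl
      rw [map_zero] at hQx
      exact hx hQx.symm
    set a := Q.leadingCoeff with ha
    have ha0 : a ≠ 0 := Polynomial.leadingCoeff_ne_zero.mpr hQ0
    have hPm : (a⁻¹ • Q).Monic := by
      rw [Polynomial.Monic, Polynomial.smul_eq_C_mul, Polynomial.leadingCoeff_mul,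
        Polynomial.leadingCoeff_C, ← ha, inv_mul_cancel₀ ha0]
    have hPd : (a⁻¹ • Q).natDegree ≤ ℓ - 1 := by
      have := Polynomial.natDegree_smul_le a⁻¹ Q
      omega
    have hval1 : a.val < p := ZMod.val_lt a
    have hval0 : a.val ≠ 0 := by
      simpa [ZMod.val_eq_zero] using ha0
    set m : ℤ := if (a.val : ℤ) ≤ kp then (a.val : ℤ) else (a.val : ℤ) - p with hm
    have hma : (m : ZMod p) = a := by
      rw [hm]
      split
      · rw [Int.cast_natCast]
        exact ZMod.natCast_rightInverse a
      · push_cast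
        rw [ZMod.natCast_self, sub_zero]
        exact ZMod.natCast_rightInverse a
    refine ⟨(m, Polynomial.aeval α (a⁻¹ • Q)), ⟨⟨?_, ?_, ?_⟩,
      ⟨a⁻¹ • Q, hPm, hPd, rfl⟩⟩, ?_⟩
    · rw [hm]; split <;> omega
    · rw [hm]; split <;> omega
    · rw [hm]; split <;> omega
    · show m • Polynomial.aeval α (a⁻¹ • Q) = x
      rw [hzsmul, hma, map_smul, smul_smul, mul_inv_cancel₀ ha0, one_smul, hQx]
end

section
/- For any positive integers a < b and any N ∈ ℕ, there exist positive integers k₊, k₋, n with k₋ < k₊, k₋·b = k₊·a (i.e., the balance ratio k₋/k₊ equals a/b), n > N, and a subgroup Λ ⊆ ℤⁿ that is a lattice tiling of ℤⁿ by (k₊, k₋, n)-quasi-crosses. Consequently, for every rational balance ratio β ∈ (0,1) there are lattice tilings by quasi-crosses of that balance ratio in unboundedly many dimensions. -/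
/-- The `(k₊, k₋, n)`-quasi-cross: the zero vector together with all vectors `m • eᵢ`
with `-k₋ ≤ m ≤ k₊`, `m ≠ 0`. -/
def quasiCross (kp km : ℤ) (n : ℕ) : Set (Fin n → ℤ) :=
  {x | x = 0 ∨ ∃ i : Fin n, ∃ m : ℤ, -km ≤ m ∧ m ≤ kp ∧ m ≠ 0 ∧ x = Pi.single i m}

/-- `Λ` is a lattice tiling of `ℤⁿ` by `(k₊, k₋, n)`-quasi-crosses: every `z ∈ ℤⁿ` has a
unique representation `z = v + e` with `v` in `Λ` and `e` in the quasi-cross. -/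
def IsLatticeTiling {n : ℕ} (Λ : AddSubgroup (Fin n → ℤ)) (kp km : ℤ) : Prop :=
  ∀ z : Fin n → ℤ, ∃! ve : (Fin n → ℤ) × (Fin n → ℤ),
    ve.1 ∈ Λ ∧ ve.2 ∈ quasiCross kp km n ∧ z = ve.1 + ve.2

open Projectivization in
set_option maxHeartbeats 800000 in
/-- The Hamming-style construction: if `k₋ + k₊ = q - 1` with `q` prime, then in
dimension `n = |ℙ(𝔽_q^(N+1))| > N` there is a lattice tiling by quasi-crosses. -/
theorem core_tiling (q : ℕ) (hq : q.Prime) (kp km : ℤ) (hkp : 0 < kp) (hkm : 0 < km)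
    (hsum : km + kp = (q : ℤ) - 1) (N : ℕ) :
    ∃ n : ℕ, N < n ∧ ∃ Λ : AddSubgroup (Fin n → ℤ), IsLatticeTiling Λ kp km := by
  haveI : Fact q.Prime := ⟨hq⟩
  haveI : Finite (Projectivization (ZMod q) (Fin (N + 1) → ZMod q)) := Quotient.finite _
  set n := Nat.card (Projectivization (ZMod q) (Fin (N + 1) → ZMod q)) with hn
  set equ : Fin n ≃ Projectivization (ZMod q) (Fin (N + 1) → ZMod q) := (Finite.equivFin (Projectivization (ZMod q) (Fin (N + 1) → ZMod q))).symm with hequ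
  set s : Fin n → (Fin (N + 1) → ZMod q) := fun i => (equ i).rep with hs
  have hs0 : ∀ i, s i ≠ 0 := fun i => (equ i).rep_nonzero
  have hmks : ∀ i, Projectivization.mk (ZMod q) (s i) (hs0 i) = equ i :=
    fun i => Projectivization.mk_rep (equ i)
  -- casting facts
  have hcast : ∀ m : ℤ, -km ≤ m → m ≤ kp → m ≠ 0 → (m : (ZMod q)) ≠ 0 := by
    intro m h1 h2 h3 h
    rw [ZMod.intCast_zmod_eq_zero_iff_dvd] at h
    have := Int.le_of_dvd (abs_pos.mpr h3) ((dvd_abs _ _).mpr h)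
    rcases abs_cases m with ⟨he, _⟩ | ⟨he, _⟩ <;> omega
  have hinj : ∀ m m' : ℤ, -km ≤ m → m ≤ kp → -km ≤ m' → m' ≤ kp →
      (m : (ZMod q)) = (m' : (ZMod q)) → m = m' := by
    intro m m' h1 h2 h3 h4 h
    have h5 : ((m - m' : ℤ) : (ZMod q)) = 0 := by push_cast; rw [h]; ring
    rw [ZMod.intCast_zmod_eq_zero_iff_dvd] at h5
    rcases eq_or_ne (m - m') 0 with h6 | h6
    · omega
    · have := Int.le_of_dvd (abs_pos.mpr h6) ((dvd_abs _ _).mpr h5)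
      rcases abs_cases (m - m') with ⟨he, _⟩ | ⟨he, _⟩ <;> omega
  have hex : ∀ c : (ZMod q), c ≠ 0 → ∃ m : ℤ, -km ≤ m ∧ m ≤ kp ∧ m ≠ 0 ∧ (m : (ZMod q)) = c := by
    intro c hc
    have hval : ((c.val : ℤ) : (ZMod q)) = c := by
      push_cast
      rw [ZMod.natCast_val, ZMod.cast_id]
    have hvlt : (c.val : ℤ) < q := by exact_mod_cast ZMod.val_lt c
    have hvne : (c.val : ℤ) ≠ 0 := by
      simp only [ne_eq, Int.natCast_eq_zero]
      intro h
      exact hc (by rw [← hval, h]; simp)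
    rcases le_or_gt (c.val : ℤ) kp with h | h
    · exact ⟨(c.val : ℤ), by omega, h, hvne, hval⟩
    · refine ⟨(c.val : ℤ) - q, by omega, by omega, by omega, ?_⟩
      rw [Int.cast_sub, hval, Int.cast_natCast, ZMod.natCast_self, sub_zero]
  -- the homomorphism
  set φ : (Fin n → ℤ) →+ (Fin (N + 1) → ZMod q) :=
    { toFun := fun z => ∑ i, z i • s i
      map_zero' := by simp
      map_add' := by
        intro x y
        simp [add_smul, Finset.sum_add_distrib] } with hφ
  have hφ_single : ∀ (i : Fin n) (m : ℤ), φ (Pi.single i m) = (m : (ZMod q)) • s i := by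
    intro i m
    have : φ (Pi.single i m) = ∑ j : Fin n, (Pi.single i m : Fin n → ℤ) j • s j := rfl
    rw [this, Fintype.sum_eq_single i]
    · rw [Pi.single_eq_same, Int.cast_smul_eq_zsmul]
    · intro j hj
      rw [Pi.single_eq_of_ne hj, zero_smul]
  -- uniqueness of quasi-cross representative of each value of φ
  have key : ∀ g : (Fin (N + 1) → ZMod q), ∃! e : Fin n → ℤ, e ∈ quasiCross kp km n ∧ φ e = g := by
    intro g
    rcases eq_or_ne g 0 with rfl | hg
    · refine ⟨0, ⟨Or.inl rfl, map_zero φ⟩, ?_⟩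
      rintro e ⟨he, hφe⟩
      rcases he with rfl | ⟨i, m, h1, h2, h3, rfl⟩
      · rfl
      · exfalso
        rw [hφ_single] at hφe
        exact smul_ne_zero (hcast m h1 h2 h3) (hs0 i) hφe
    · -- g ≠ 0
      set p : Projectivization (ZMod q) (Fin (N + 1) → ZMod q) := Projectivization.mk (ZMod q) g hg with hp
      set i : Fin n := equ.symm p with hi
      have hmki : Projectivization.mk (ZMod q) (s i) (hs0 i) = p := by
        rw [hmks i, hi, Equiv.apply_symm_apply]
      obtain ⟨u, hu⟩ := (mk_eq_mk_iff (ZMod q) (s i) g (hs0 i) hg).mp (by rw [hmki])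
      -- s i = u • g, so g = u⁻¹ • s i
      have hgu : g = (↑u⁻¹ : (ZMod q)) • s i := by
        have h' : (↑u⁻¹ : (ZMod q)) • (u • g) = (↑u⁻¹ : (ZMod q)) • s i := by rw [hu]
        rwa [Units.smul_def, smul_smul, Units.inv_mul, one_smul] at h'
      obtain ⟨m, h1, h2, h3, h4⟩ := hex (↑u⁻¹ : (ZMod q)) (Units.ne_zero u⁻¹)
      refine ⟨Pi.single i m, ⟨Or.inr ⟨i, m, h1, h2, h3, rfl⟩, ?_⟩, ?_⟩
      · rw [hφ_single, h4, ← hgu]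
      · rintro e ⟨he, hφe⟩
        rcases he with rfl | ⟨i', m', h1', h2', h3', rfl⟩
        · exact absurd (by simpa using hφe.symm) hg
        · rw [hφ_single] at hφe
          have hci' : ((m' : ℤ) : (ZMod q)) ≠ 0 := hcast m' h1' h2' h3'
          -- the line of s i' is p
          have hmk' : Projectivization.mk (ZMod q) g hg = Projectivization.mk (ZMod q) (s i') (hs0 i') := by
            rw [mk_eq_mk_iff']
            exact ⟨((m' : ℤ) : (ZMod q)), hφe⟩
          have hii : i' = i := by
            rw [hi]
            apply equ.injective
            rw [Equiv.apply_symm_apply, hp, hmk', hmks]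
          subst hii
          have hsame : ((m' : ℤ) : (ZMod q)) • s i = ((m : ℤ) : (ZMod q)) • s i := by
            rw [hφe, hgu, h4]
          have hmm : ((m' : ℤ) : (ZMod q)) = ((m : ℤ) : (ZMod q)) := by
            have h0 : (((m' : ℤ) : (ZMod q)) - ((m : ℤ) : (ZMod q))) • s i = 0 := by
              rw [sub_smul, hsame, sub_self]
            rcases smul_eq_zero.mp h0 with h | h
            · exact sub_eq_zero.mp h
            · exact absurd h (hs0 i)
          rw [hinj m' m h1' h2' h1 h2 hmm]
  refine ⟨n, ?_, φ.ker, ?_⟩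
  · -- n > N
    have hinjP : Function.Injective
        (fun j : Fin (N + 1) => Projectivization.mk (ZMod q) (Pi.single j (1 : (ZMod q)))
          (by simp [Function.ne_iff])) := by
      intro j j' hjj
      by_contra hne
      rw [mk_eq_mk_iff] at hjj
      obtain ⟨a, ha⟩ := hjj
      have := congrFun ha j'
      rw [Units.smul_def, Pi.smul_apply, Pi.single_eq_same, Pi.single_eq_of_ne (Ne.symm hne),
        smul_eq_mul, mul_one] at this
      exact a.ne_zero this
    have := Nat.card_le_card_of_injective _ hinjP
    simp only [Nat.card_eq_fintype_card, Fintype.card_fin] at this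
    omega
  · -- the tiling property
    intro z
    obtain ⟨e, ⟨heq, heφ⟩, hu⟩ := key (φ z)
    refine ⟨(z - e, e), ⟨?_, heq, by simp⟩, ?_⟩
    · rw [AddMonoidHom.mem_ker, map_sub, heφ, sub_self]
    · rintro ⟨v', e'⟩ ⟨hv', he', hz⟩
      have hφe' : φ e' = φ z := by
        rw [hz, map_add, AddMonoidHom.mem_ker.mp hv', zero_add]
      have he'e : e' = e := hu e' ⟨he', hφe'⟩
      subst he'e
      have hv : v' = z - e' := by rw [hz, add_sub_cancel_right]
      rw [Prod.ext_iff]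
      exact ⟨hv, rfl⟩

theorem stmt2 (a b : ℕ) (ha : 0 < a) (hab : a < b) (N : ℕ) :
    ∃ (kp km n : ℕ), 0 < km ∧ km < kp ∧ km * b = kp * a ∧ N < n ∧
      ∃ Λ : AddSubgroup (Fin n → ℤ), IsLatticeTiling Λ (kp : ℤ) (km : ℤ) := by
  obtain ⟨q, hq, hq1, hqmod⟩ := Nat.exists_prime_gt_modEq_one (k := a + b) 1 (by omega)
  have hdvd : (a + b) ∣ q - 1 := (Nat.modEq_iff_dvd' (by omega)).mp hqmod.symm
  obtain ⟨t, ht⟩ := hdvd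
  have ht1 : 1 ≤ t := by
    rcases Nat.eq_zero_or_pos t with rfl | h
    · omega
    · exact h
  obtain ⟨n, hn, Λ, hΛ⟩ := core_tiling q hq ((b * t : ℕ) : ℤ) ((a * t : ℕ) : ℤ)
    (by exact_mod_cast Nat.mul_pos (by omega) ht1) (by exact_mod_cast Nat.mul_pos ha ht1)
    (by
      have h1 : a * t + b * t = (a + b) * t := by ring
      omega) N
  exact ⟨b * t, a * t, n, Nat.mul_pos ha ht1, by nlinarith, by ring, hn, Λ, hΛ⟩
end

section
/- Let n ≥ 2 and let k₊, k₋ be integers with 0 < k₋ < k₊. If 2k₊(k₋ + 1) - k₋² > n(k₊ + k₋), then there is no subgroup Λ ⊆ ℤⁿ that is a lattice tiling of ℤⁿ by (k₊, k₋, n)-quasi-crosses. -/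
set_option maxHeartbeats 2000000 in
theorem stmt4 (n : ℕ) (hn : 2 ≤ n) (kp km : ℤ) (h0 : 0 < km) (hlt : km < kp)
    (h : 2 * kp * (km + 1) - km ^ 2 > n * (kp + km)) :
    ¬ ∃ Λ : AddSubgroup (Fin n → ℤ), IsLatticeTiling Λ kp km := by
  rintro ⟨Λ, hT⟩
  have h1n : 1 < n := hn
  set i0 : Fin n := ⟨0, by omega⟩ with hi0
  set i1 : Fin n := ⟨1, by omega⟩ with hi1
  have hne : i0 ≠ i1 := by
    intro hcon
    have := congrArg Fin.val hcon
    simp [hi0, hi1] at this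
  -- membership in the quasi-cross
  have memQC : ∀ (i : Fin n) (m : ℤ), -km ≤ m → m ≤ kp →
      Pi.single i m ∈ quasiCross kp km n := by
    intro i m hm1 hm2
    by_cases hm : m = 0
    · exact Or.inl (by simp [hm])
    · exact Or.inr ⟨i, m, hm1, hm2, hm, rfl⟩
  -- key cancellation lemma: a lattice vector which is a difference of two
  -- cross elements must be zero
  have key : ∀ (i j : Fin n), ∀ a b : ℤ, -km ≤ a → a ≤ kp → -km ≤ b → b ≤ kp →
      Pi.single i a + Pi.single j (-b) ∈ Λ →
      Pi.single i a + Pi.single j (-b) = (0 : Fin n → ℤ) := by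
    intro i j a b ha1 ha2 hb1 hb2 hmem
    have hz : (Pi.single i a : Fin n → ℤ) =
        (Pi.single i a + Pi.single j (-b)) + Pi.single j b := by
      rw [add_assoc, ← Pi.single_add]
      simp
    have huni := (hT (Pi.single i a)).unique
      (⟨hmem, memQC j b hb1 hb2, hz⟩ :
        (Pi.single i a + Pi.single j (-b), (Pi.single j b : Fin n → ℤ)).1 ∈ Λ ∧ _)
      (⟨Λ.zero_mem, memQC i a ha1 ha2, by rw [zero_add]⟩ :
        ((0 : Fin n → ℤ), (Pi.single i a : Fin n → ℤ)).1 ∈ Λ ∧ _)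
    exact congrArg Prod.fst huni
  -- the point associated to a pair
  set ψ : ℤ × ℤ → (Fin n → ℤ) := fun p => Pi.single i0 p.1 + Pi.single i1 p.2 with hψ
  -- the cross-element component of the unique representation
  set f : ℤ × ℤ → (Fin n → ℤ) := fun p => ((hT (ψ p)).choose).2 with hf
  -- the L-shaped region
  set A : Finset (ℤ × ℤ) := Finset.Icc 0 kp ×ˢ Finset.Icc 0 km with hA
  set B : Finset (ℤ × ℤ) := Finset.Icc 0 km ×ˢ Finset.Icc 0 kp with hB
  set R : Finset (ℤ × ℤ) := A ∪ B with hR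
  -- the target finset of cross elements
  set crossF : Finset (Fin n → ℤ) :=
    insert 0 ((Finset.univ ×ˢ ((Finset.Icc (-km) kp).erase 0)).image
      fun q : Fin n × ℤ => Pi.single q.1 q.2) with hcrossF
  have hmaps : ∀ p ∈ R, f p ∈ crossF := by
    intro p _
    have hqc : f p ∈ quasiCross kp km n := ((hT (ψ p)).choose_spec.1).2.1
    rcases hqc with h0' | ⟨i, m, hm1, hm2, hm0, hx⟩
    · rw [h0']; exact Finset.mem_insert_self _ _
    · rw [hx]
      refine Finset.mem_insert_of_mem (Finset.mem_image.2 ⟨(i, m), ?_, rfl⟩)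
      simp [Finset.mem_product, Finset.mem_erase, Finset.mem_Icc, hm0, hm1, hm2]
  -- cardinality of crossF
  have hIccCard : ((Finset.Icc (-km) kp).erase 0).card = (kp + km).toNat := by
    rw [Finset.card_erase_of_mem (by simp [Finset.mem_Icc]; omega), Int.card_Icc]
    omega
  have hcrossCard : (crossF.card : ℤ) ≤ 1 + n * (kp + km) := by
    have h1 : crossF.card ≤ n * (kp + km).toNat + 1 := by
      rw [hcrossF]
      refine le_trans (Finset.card_insert_le _ _) ?_
      have h2 := Finset.card_image_le
        (s := Finset.univ ×ˢ ((Finset.Icc (-km) kp).erase 0))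
        (f := fun q : Fin n × ℤ => (Pi.single q.1 q.2 : Fin n → ℤ))
      rw [Finset.card_product, hIccCard, Finset.card_univ, Fintype.card_fin] at h2
      omega
    have h3 : ((kp + km).toNat : ℤ) = kp + km := Int.toNat_of_nonneg (by omega)
    zify [h3] at h1
    linarith
  -- cardinality of R
  have hint : A ∩ B = Finset.Icc (0:ℤ) km ×ˢ Finset.Icc (0:ℤ) km := by
    ext ⟨x, y⟩
    simp only [hA, hB, Finset.mem_inter, Finset.mem_product, Finset.mem_Icc]
    omega
  have hRcard : (R.card : ℤ) = 2 * (kp + 1) * (km + 1) - (km + 1) * (km + 1) := by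
    have hu := Finset.card_union_add_card_inter A B
    rw [hint] at hu
    have hAc : A.card = (kp + 1).toNat * (km + 1).toNat := by
      rw [hA, Finset.card_product, Int.card_Icc, Int.card_Icc]; congr 1 <;> omega
    have hBc : B.card = (km + 1).toNat * (kp + 1).toNat := by
      rw [hB, Finset.card_product, Int.card_Icc, Int.card_Icc]; congr 1 <;> omega
    have hIc : (Finset.Icc (0:ℤ) km ×ˢ Finset.Icc (0:ℤ) km).card
        = (km + 1).toNat * (km + 1).toNat := by
      rw [Finset.card_product, Int.card_Icc]; congr 1 <;> omega
    rw [hAc, hBc, hIc] at hu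
    have ha : ((kp + 1).toNat : ℤ) = kp + 1 := Int.toNat_of_nonneg (by omega)
    have hb : ((km + 1).toNat : ℤ) = km + 1 := Int.toNat_of_nonneg (by omega)
    have := congrArg (fun x : ℕ => (x : ℤ)) hu
    push_cast [ha, hb] at this
    linarith
  have hcard : crossF.card < R.card := by
    have : (crossF.card : ℤ) < (R.card : ℤ) := by
      rw [hRcard]
      nlinarith [hcrossCard]
    exact_mod_cast this
  -- pigeonhole
  obtain ⟨p, hp, p', hp', hpp', hfeq⟩ :=
    Finset.exists_ne_map_eq_of_card_lt_of_maps_to hcard hmaps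
  -- the difference lies in Λ
  obtain ⟨hv, he, hzp⟩ := (hT (ψ p)).choose_spec.1
  obtain ⟨hv', he', hzp'⟩ := (hT (ψ p')).choose_spec.1
  set v1 := (hT (ψ p)).choose.1 with hv1
  set e1 := (hT (ψ p)).choose.2 with he1
  set v2 := (hT (ψ p')).choose.1 with hv2
  set e2 := (hT (ψ p')).choose.2 with he2
  have hfeq2 : e1 = e2 := hfeq
  have hδΛ : ψ p - ψ p' ∈ Λ := by
    have heq : ψ p - ψ p' = v1 - v2 := by
      rw [hzp, hzp', hfeq2]; abel
    rw [heq]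
    exact Λ.sub_mem hv hv'
  set dx : ℤ := p.1 - p'.1 with hdx
  set dy : ℤ := p.2 - p'.2 with hdy
  have hform : ψ p - ψ p' = Pi.single i0 dx + Pi.single i1 dy := by
    funext x
    by_cases hx0 : x = i0
    · by_cases hx1 : x = i1
      · exact absurd (hx0.symm.trans hx1) hne
      · simp [hψ, Pi.single_apply, hx0, hx1, hne, hdx, hdy]
    · by_cases hx1 : x = i1
      · simp [hψ, Pi.single_apply, hx0, hx1, Ne.symm hne, hdx, hdy]
      · simp [hψ, Pi.single_apply, hx0, hx1]
  rw [hform] at hδΛ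
  -- bounds from membership in R
  have hpb : (0 ≤ p.1 ∧ p.1 ≤ kp ∧ 0 ≤ p.2 ∧ p.2 ≤ km) ∨
      (0 ≤ p.1 ∧ p.1 ≤ km ∧ 0 ≤ p.2 ∧ p.2 ≤ kp) := by
    have := hp
    simp only [hR, hA, hB, Finset.mem_union, Finset.mem_product, Finset.mem_Icc] at this
    tauto
  have hpb' : (0 ≤ p'.1 ∧ p'.1 ≤ kp ∧ 0 ≤ p'.2 ∧ p'.2 ≤ km) ∨
      (0 ≤ p'.1 ∧ p'.1 ≤ km ∧ 0 ≤ p'.2 ∧ p'.2 ≤ kp) := by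
    have := hp'
    simp only [hR, hA, hB, Finset.mem_union, Finset.mem_product, Finset.mem_Icc] at this
    tauto
  have hcase : (-km ≤ dx ∧ dx ≤ kp ∧ -km ≤ -dy ∧ -dy ≤ kp) ∨
      (-km ≤ dy ∧ dy ≤ kp ∧ -km ≤ -dx ∧ -dx ≤ kp) := by
    rw [hdx, hdy]; omega
  have hzero : Pi.single i0 dx + Pi.single i1 dy = (0 : Fin n → ℤ) := by
    rcases hcase with ⟨hc1, hc2, hc3, hc4⟩ | ⟨hc1, hc2, hc3, hc4⟩
    · have := key i0 i1 dx (-dy) hc1 hc2 hc3 hc4 (by rwa [neg_neg])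
      rwa [neg_neg] at this
    · have := key i1 i0 dy (-dx) hc1 hc2 hc3 hc4 (by rw [neg_neg, add_comm]; exact hδΛ)
      rw [neg_neg, add_comm] at this
      exact this
  have hdx0 : dx = 0 := by
    have := congrFun hzero i0
    simpa [Pi.single_apply, hne, Ne.symm hne] using this
  have hdy0 : dy = 0 := by
    have := congrFun hzero i1
    simpa [Pi.single_apply, hne, Ne.symm hne] using this
  apply hpp'
  have h1 : p.1 = p'.1 := by omega
  have h2 : p.2 = p'.2 := by omega
  exact Prod.ext h1 h2
end

section
/- Let n ≥ 3 and let k₊, k₋ be integers with 0 < k₋ < k₊. Suppose there exists a subgroup Λ ⊆ ℤⁿ that is a lattice tiling of ℤⁿ by (k₊, k₋, n)-quasi-crosses and that 2k₋ > n - 2. Then 8·k₊ ≤ 3n² if n is even, and 4·k₊ ≤ 3n² - 4n + 1 if n is odd. -/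
theorem stmt7 (n : ℕ) (hn : 3 ≤ n) (kp km : ℤ) (h0 : 0 < km) (hlt : km < kp)
    (h : ∃ Λ : AddSubgroup (Fin n → ℤ), IsLatticeTiling Λ kp km)
    (hbig : 2 * km > (n : ℤ) - 2) :
    (Even n → 8 * kp ≤ 3 * (n : ℤ) ^ 2) ∧
    (Odd n → 4 * kp ≤ 3 * (n : ℤ) ^ 2 - 4 * n + 1) := by
  classical
  obtain ⟨Λ, hΛ⟩ := h
  have h0n : 0 < n := by omega
  have h1n : 1 < n := by omega
  set i0 : Fin n := ⟨0, h0n⟩ with hi0def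
  set i1 : Fin n := ⟨1, h1n⟩ with hi1def
  have hi01 : i0 ≠ i1 := by
    simp [hi0def, hi1def, Fin.ext_iff]
  have hi10 : i1 ≠ i0 := hi01.symm
  have padd : ∀ (i : Fin n) (a b : ℤ),
      (Pi.single i (a + b) : Fin n → ℤ) = Pi.single i a + Pi.single i b := by
    intro i a b; funext x
    by_cases hx : x = i
    · subst hx; simp
    · simp [Pi.single_eq_of_ne hx]
  have psub : ∀ (i : Fin n) (a b : ℤ),
      (Pi.single i (a - b) : Fin n → ℤ) = Pi.single i a - Pi.single i b := by
    intro i a b; funext x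
    by_cases hx : x = i
    · subst hx; simp
    · simp [Pi.single_eq_of_ne hx]
  -- Key lemma: small two-coordinate vectors are not in the lattice
  have key : ∀ d e : ℤ, -km ≤ d → d ≤ kp → -kp ≤ e → e ≤ km →
      Pi.single i0 d + Pi.single i1 e ∈ Λ → d = 0 ∧ e = 0 := by
    intro d e hd1 hd2 he1 he2 hw
    have hz : (Pi.single i0 d : Fin n → ℤ)
        = (Pi.single i0 d + Pi.single i1 e) + Pi.single i1 (-e) := by
      rw [add_assoc, ← padd i1]
      simp
    have hQ1 : Pi.single i0 d ∈ quasiCross kp km n := by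
      simp only [quasiCross, Set.mem_setOf_eq]
      by_cases hd0 : d = 0
      · exact Or.inl (by simp [hd0])
      · exact Or.inr ⟨i0, d, hd1, hd2, hd0, rfl⟩
    have hQ2 : Pi.single i1 (-e) ∈ quasiCross kp km n := by
      simp only [quasiCross, Set.mem_setOf_eq]
      by_cases he0 : e = 0
      · exact Or.inl (by simp [he0])
      · exact Or.inr ⟨i1, -e, by omega, by omega, by omega, rfl⟩
    obtain ⟨ve₀, hve₀, huniq⟩ := hΛ (Pi.single i0 d)
    have h1 := huniq (Pi.single i0 d + Pi.single i1 e, Pi.single i1 (-e)) ⟨hw, hQ2, hz⟩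
    have h2 := huniq ((0 : Fin n → ℤ), Pi.single i0 d)
      ⟨Λ.zero_mem, hQ1, (zero_add _).symm⟩
    have hEq := h1.trans h2.symm
    have hw0 : Pi.single i0 d + Pi.single i1 e = (0 : Fin n → ℤ) :=
      congrArg Prod.fst hEq
    constructor
    · have hx := congrFun hw0 i0
      simpa [Pi.single_eq_of_ne hi01] using hx
    · have hx := congrFun hw0 i1
      simpa [Pi.single_eq_of_ne hi10] using hx
  -- the staircase set
  set A1 : Finset (ℤ × ℤ) := Finset.Icc (0:ℤ) kp ×ˢ Finset.Icc (0:ℤ) km with hA1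
  set A2 : Finset (ℤ × ℤ) := Finset.Icc (0:ℤ) km ×ˢ Finset.Icc (km+1) kp with hA2
  set T : Finset (Fin n → ℤ) := insert 0
    (((Finset.univ : Finset (Fin n)) ×ˢ ((Finset.Icc (-km) kp).erase 0)).image
      fun q : Fin n × ℤ => (Pi.single q.1 q.2 : Fin n → ℤ)) with hT
  have hall : ∀ p : ℤ × ℤ, ∃ ve : (Fin n → ℤ) × (Fin n → ℤ),
      ve.1 ∈ Λ ∧ ve.2 ∈ quasiCross kp km n ∧
      Pi.single i0 p.1 + Pi.single i1 p.2 = ve.1 + ve.2 :=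
    fun p => (hΛ _).exists
  choose VE hVE using hall
  have hmaps : ∀ p ∈ A1 ∪ A2, (VE p).2 ∈ T := by
    intro p _
    have hq := (hVE p).2.1
    simp only [quasiCross, Set.mem_setOf_eq] at hq
    rcases hq with hq | ⟨i, m, hm1, hm2, hm0, hq⟩
    · rw [hT, hq]
      exact Finset.mem_insert_self _ _
    · rw [hT]
      refine Finset.mem_insert.2 (Or.inr (Finset.mem_image.2 ⟨(i, m), ?_, ?_⟩))
      · exact Finset.mem_product.2 ⟨Finset.mem_univ _,
          Finset.mem_erase.2 ⟨hm0, Finset.mem_Icc.2 ⟨hm1, hm2⟩⟩⟩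
      · exact hq.symm
  have hinj : Set.InjOn (fun p => (VE p).2) ↑(A1 ∪ A2) := by
    intro p hp q hq hFeq
    change (VE p).2 = (VE q).2 at hFeq
    have hp' : p ∈ A1 ∪ A2 := hp
    have hq' : q ∈ A1 ∪ A2 := hq
    have e1 : (VE p).1 = (Pi.single i0 p.1 + Pi.single i1 p.2) - (VE p).2 :=
      eq_sub_of_add_eq ((hVE p).2.2).symm
    have e2 : (VE q).1 = (Pi.single i0 q.1 + Pi.single i1 q.2) - (VE q).2 :=
      eq_sub_of_add_eq ((hVE q).2.2).symm
    have hsub : (VE p).1 - (VE q).1 ∈ Λ := Λ.sub_mem (hVE p).1 (hVE q).1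
    have hvv : (VE p).1 - (VE q).1
        = Pi.single i0 (p.1 - q.1) + Pi.single i1 (p.2 - q.2) := by
      rw [e1, e2, hFeq, psub i0, psub i1]
      abel
    have hsub2 : (VE q).1 - (VE p).1 ∈ Λ := Λ.sub_mem (hVE q).1 (hVE p).1
    have hvv2 : (VE q).1 - (VE p).1
        = Pi.single i0 (q.1 - p.1) + Pi.single i1 (q.2 - p.2) := by
      rw [e1, e2, hFeq, psub i0, psub i1]
      abel
    rw [hvv] at hsub
    rw [hvv2] at hsub2
    simp only [hA1, hA2, Finset.mem_union, Finset.mem_product, Finset.mem_Icc] at hp' hq'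
    have hcase : (-km ≤ p.1 - q.1 ∧ p.1 - q.1 ≤ kp ∧ -kp ≤ p.2 - q.2 ∧ p.2 - q.2 ≤ km)
        ∨ (-km ≤ q.1 - p.1 ∧ q.1 - p.1 ≤ kp ∧ -kp ≤ q.2 - p.2 ∧ q.2 - p.2 ≤ km) := by
      omega
    rcases hcase with ⟨c1, c2, c3, c4⟩ | ⟨c1, c2, c3, c4⟩
    · obtain ⟨hd, he⟩ := key _ _ c1 c2 c3 c4 hsub
      exact Prod.ext_iff.2 ⟨by omega, by omega⟩
    · obtain ⟨hd, he⟩ := key _ _ c1 c2 c3 c4 hsub2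
      exact Prod.ext_iff.2 ⟨by omega, by omega⟩
  have hST : (A1 ∪ A2).card ≤ T.card :=
    Finset.card_le_card_of_injOn (fun p => (VE p).2) hmaps hinj
  have hc1 : (A1.card : ℤ) = (kp + 1) * (km + 1) := by
    rw [hA1, Finset.card_product, Int.card_Icc, Int.card_Icc]
    push_cast
    rw [Int.toNat_of_nonneg (by omega : (0:ℤ) ≤ kp + 1 - 0),
        Int.toNat_of_nonneg (by omega : (0:ℤ) ≤ km + 1 - 0)]
    ring
  have hc2 : (A2.card : ℤ) = (km + 1) * (kp - km) := by
    rw [hA2, Finset.card_product, Int.card_Icc, Int.card_Icc]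
    push_cast
    rw [Int.toNat_of_nonneg (by omega : (0:ℤ) ≤ km + 1 - 0),
        Int.toNat_of_nonneg (by omega : (0:ℤ) ≤ kp + 1 - (km + 1))]
    ring
  have hdisj : Disjoint A1 A2 := by
    rw [Finset.disjoint_left]
    intro a ha1 ha2
    rw [hA1, Finset.mem_product, Finset.mem_Icc, Finset.mem_Icc] at ha1
    rw [hA2, Finset.mem_product, Finset.mem_Icc, Finset.mem_Icc] at ha2
    omega
  have hScard : ((A1 ∪ A2).card : ℤ)
      = (kp + 1) * (km + 1) + (km + 1) * (kp - km) := by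
    rw [Finset.card_union_of_disjoint hdisj]
    push_cast
    rw [hc1, hc2]
  have hTbig : (T.card : ℤ) ≤ 1 + (n : ℤ) * (kp + km) := by
    have h1 : T.card ≤ (((Finset.univ : Finset (Fin n)) ×ˢ ((Finset.Icc (-km) kp).erase 0)).image
        (fun q : Fin n × ℤ => (Pi.single q.1 q.2 : Fin n → ℤ))).card + 1 := by
      rw [hT]; exact Finset.card_insert_le _ _
    have h2 : (((Finset.univ : Finset (Fin n)) ×ˢ ((Finset.Icc (-km) kp).erase 0)).image
        (fun q : Fin n × ℤ => (Pi.single q.1 q.2 : Fin n → ℤ))).card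
        ≤ n * ((Finset.Icc (-km) kp).erase 0).card := by
      refine le_trans Finset.card_image_le ?_
      rw [Finset.card_product, Finset.card_univ, Fintype.card_fin]
    have h4 : ((Finset.Icc (-km) kp).erase 0).card = (Finset.Icc (-km) kp).card - 1 :=
      Finset.card_erase_of_mem (Finset.mem_Icc.2 ⟨by omega, by omega⟩)
    have h5 : (Finset.Icc (-km) kp).card = (kp + km + 1).toNat := by
      rw [Int.card_Icc]; congr 1; ring
    have h6 : ((((Finset.Icc (-km) kp).erase 0).card : ℕ) : ℤ) = kp + km := by
      rw [h4, h5]; omega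
    have h7 : T.card ≤ n * ((Finset.Icc (-km) kp).erase 0).card + 1 :=
      le_trans h1 (Nat.add_le_add_right h2 1)
    have h8 : (T.card : ℤ) ≤ (n : ℤ) * ((((Finset.Icc (-km) kp).erase 0).card : ℕ) : ℤ) + 1 := by
      exact_mod_cast h7
    rw [h6] at h8
    linarith
  have hSTZ : (((A1 ∪ A2).card : ℕ) : ℤ) ≤ (T.card : ℤ) := by exact_mod_cast hST
  rw [hScard] at hSTZ
  have hMain : (kp + 1) * (km + 1) + (km + 1) * (kp - km) ≤ 1 + (n : ℤ) * (kp + km) :=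
    le_trans hSTZ hTbig
  have hY : (0:ℤ) ≤ kp - 1 - km := by omega
  constructor
  · intro hev
    obtain ⟨t, ht⟩ := hev
    have hn4 : 4 ≤ n := by omega
    have hnt : (n : ℤ) = (t : ℤ) + (t : ℤ) := by exact_mod_cast congrArg (Nat.cast : ℕ → ℤ) ht
    have hX : (0:ℤ) ≤ 2 * km - (n : ℤ) := by omega
    by_contra hcon
    push_neg at hcon
    have hcon' : 3 * (n : ℤ) ^ 2 + 1 ≤ 8 * kp := Int.add_one_le_iff.2 hcon
    have hn4' : (4 : ℤ) ≤ (n : ℤ) := by exact_mod_cast hn4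
    have hZ : (0:ℤ) ≤ 2 * kp - 3 * (n : ℤ) + 2 := by
      nlinarith [mul_nonneg (show (0:ℤ) ≤ (n:ℤ) - 1 by linarith)
        (show (0:ℤ) ≤ (n:ℤ) - 3 by linarith)]
    nlinarith [hMain, mul_nonneg hX hY, mul_nonneg hX hZ]
  · intro _
    have hX : (0:ℤ) ≤ 2 * km - (n : ℤ) + 1 := by omega
    by_contra hcon
    push_neg at hcon
    have hcon' : 3 * (n : ℤ) ^ 2 - 4 * (n : ℤ) + 1 + 1 ≤ 4 * kp := Int.add_one_le_iff.2 hcon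
    have hn3' : (3 : ℤ) ≤ (n : ℤ) := by exact_mod_cast hn
    have hZ : (0:ℤ) ≤ 2 * kp - 3 * (n : ℤ) + 3 := by
      nlinarith [mul_nonneg (show (0:ℤ) ≤ 3 * (n:ℤ) - 4 by linarith)
        (show (0:ℤ) ≤ (n:ℤ) - 2 by linarith)]
    nlinarith [hMain, mul_nonneg hX hY, mul_nonneg hX hZ]
end

section
/- Let k₊, k₋ be integers with 0 < k₋ < k₊, let M = [-k₋, k₊]*, and suppose M and some finite set S split a finite additive abelian group G with |G| > 1. Assume the splitting is purely singular, i.e., for every prime p dividing |G| there exists m ∈ M with p | m. Then for every prime p dividing |G|, the number δ_p(M) of elements of M divisible by p satisfies p² · δ_p(M) ≥ |M| = k₊ + k₋. -/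
theorem stmt8 {G : Type*} [AddCommGroup G] [Fintype G] (hG : 1 < Fintype.card G)
    (kp km : ℤ) (h0 : 0 < km) (hlt : km < kp)
    (S : Set G) (hSfin : S.Finite)
    (hsplit : Splits {m : ℤ | -km ≤ m ∧ m ≤ kp ∧ m ≠ 0} S)
    (hps : ∀ p : ℕ, p.Prime → p ∣ Fintype.card G →
      ∃ m ∈ {m : ℤ | -km ≤ m ∧ m ≤ kp ∧ m ≠ 0}, (p : ℤ) ∣ m)
    (p : ℕ) (hp : p.Prime) (hpG : p ∣ Fintype.card G) :
    kp + km ≤ (p : ℤ) ^ 2 *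
      Nat.card {m : ℤ | (-km ≤ m ∧ m ≤ kp ∧ m ≠ 0) ∧ (p : ℤ) ∣ m} := by
  obtain ⟨m, hmM, hmdvd⟩ := hps p hp hpG
  obtain ⟨hm1, hm2, hm3⟩ := hmM
  have hp2 : (2 : ℤ) ≤ (p : ℤ) := by exact_mod_cast hp.two_le
  have hppos : (0 : ℤ) < (p : ℤ) := by linarith
  -- p ≤ kp
  have hpkp : (p : ℤ) ≤ kp := by
    have h1 : (p : ℤ) ≤ |m| := Int.le_of_dvd (abs_pos.mpr hm3) ((dvd_abs _ _).mpr hmdvd)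
    rcases abs_cases m with ⟨h, _⟩ | ⟨h, _⟩ <;> omega
  set qp : ℤ := kp / (p : ℤ) with hqp
  set qm : ℤ := km / (p : ℤ) with hqm
  have e1 := Int.mul_ediv_add_emod kp (p : ℤ)
  have e2 := Int.mul_ediv_add_emod km (p : ℤ)
  rw [← hqp] at e1
  rw [← hqm] at e2
  have e3 := Int.emod_nonneg kp hppos.ne'
  have e4 := Int.emod_lt_of_pos kp hppos
  have e5 := Int.emod_nonneg km hppos.ne'
  have e6 := Int.emod_lt_of_pos km hppos
  have hkp1 : (p : ℤ) * qp ≤ kp := by omega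
  have hkp2 : kp < (p : ℤ) * qp + p := by omega
  have hkm1 : (p : ℤ) * qm ≤ km := by omega
  have hkm2 : km < (p : ℤ) * qm + p := by omega
  have hqp1 : 1 ≤ qp := by
    rw [hqp, Int.le_ediv_iff_mul_le hppos]; linarith
  have hqm0 : 0 ≤ qm := Int.ediv_nonneg h0.le hppos.le
  -- the target set
  set A : Set ℤ := {m : ℤ | (-km ≤ m ∧ m ≤ kp ∧ m ≠ 0) ∧ (p : ℤ) ∣ m} with hA
  have hAfin : A.Finite := (Set.finite_Icc (-km) kp).subset (by
    rintro x ⟨⟨h1, h2, _⟩, _⟩; exact ⟨h1, h2⟩)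
  set T : Finset ℤ := (Finset.Icc (-qm) qp).erase 0 with hT
  have hinj : Function.Injective (fun t : ℤ => (p : ℤ) * t) :=
    mul_right_injective₀ hppos.ne'
  have hsub : ↑(T.image (fun t : ℤ => (p : ℤ) * t)) ⊆ A := by
    intro x hx
    simp only [Finset.coe_image, Set.mem_image, Finset.mem_coe, hT,
      Finset.mem_erase, Finset.mem_Icc] at hx
    obtain ⟨t, ⟨ht0, ht1, ht2⟩, rfl⟩ := hx
    refine ⟨⟨?_, ?_, ?_⟩, Dvd.intro t rfl⟩
    · nlinarith
    · nlinarith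
    · exact mul_ne_zero hppos.ne' ht0
  have hcard1 : (T.image (fun t : ℤ => (p : ℤ) * t)).card ≤ Nat.card A := by
    rw [Nat.card_coe_set_eq, ← Set.ncard_coe_finset]
    exact Set.ncard_le_ncard hsub hAfin
  have hcard2 : (T.image (fun t : ℤ => (p : ℤ) * t)).card = T.card :=
    Finset.card_image_of_injective T hinj
  have h0mem : (0 : ℤ) ∈ Finset.Icc (-qm) qp := by
    simp [Finset.mem_Icc]; omega
  have hcard3 : T.card = (qp + 1 - (-qm)).toNat - 1 := by
    rw [hT, Finset.card_erase_of_mem h0mem, Int.card_Icc]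
  have hd : qp + qm ≤ (Nat.card A : ℤ) := by
    rw [hcard2, hcard3] at hcard1
    omega
  have hfinal : kp + km ≤ (p : ℤ) ^ 2 * (Nat.card A : ℤ) := by
    nlinarith [mul_le_mul_of_nonneg_left hd (by positivity : (0:ℤ) ≤ (p:ℤ)^2),
      mul_le_mul hp2 hqp1 (by norm_num) hppos.le]
  exact hfinal
end

section
/- Let k ≥ 2 be an integer and let M = [-(k-1), k]* = {m ∈ ℤ : -(k-1) ≤ m ≤ k, m ≠ 0}. If M and some finite set S split a finite additive abelian group G with |G| > 1, then gcd(k, |G|) ≠ 1. -/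
theorem stmt10 {G : Type*} [AddCommGroup G] [Fintype G] (hG : 1 < Fintype.card G)
    (k : ℕ) (hk : 2 ≤ k) (S : Set G) (hSfin : S.Finite)
    (hsplit : Splits {m : ℤ | -((k : ℤ) - 1) ≤ m ∧ m ≤ k ∧ m ≠ 0} S) :
    Nat.gcd k (Fintype.card G) ≠ 1 := by
  intro hgcd
  set M : Set ℤ := {m : ℤ | -((k : ℤ) - 1) ≤ m ∧ m ≤ k ∧ m ≠ 0} with hM
  have hk2 : (2:ℤ) ≤ (k:ℤ) := by exact_mod_cast hk
  have h1M : (1:ℤ) ∈ M := ⟨by linarith, by linarith, one_ne_zero⟩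
  have hm1M : (-1:ℤ) ∈ M := ⟨by linarith, by linarith, by norm_num⟩
  have hkM : (k:ℤ) ∈ M := ⟨by linarith, le_refl _, by linarith⟩
  -- injectivity of z ↦ k • z from gcd(k, |G|) = 1
  have hinj : ∀ x y : G, (k:ℤ) • x = (k:ℤ) • y → x = y := by
    intro x y h
    have h0 : (k:ℤ) • (x - y) = 0 := by rw [smul_sub, h, sub_self]
    have h0' : k • (x - y) = 0 := by
      have := natCast_zsmul (x - y) k
      rw [this] at h0; exact h0
    have hd1 : addOrderOf (x - y) ∣ k := addOrderOf_dvd_of_nsmul_eq_zero h0'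
    have hd2 : addOrderOf (x - y) ∣ Fintype.card G := addOrderOf_dvd_card
    have hdd : addOrderOf (x - y) ∣ 1 := hgcd ▸ Nat.dvd_gcd hd1 hd2
    have h1 : addOrderOf (x - y) = 1 := Nat.dvd_one.mp hdd
    have : x - y = 0 := AddMonoid.addOrderOf_eq_one_iff.mp h1
    exact sub_eq_zero.mp this
  -- S is closed under negation
  have hneg : ∀ s ∈ S, -s ∈ S := by
    intro s hs
    have hks : (k:ℤ) • s ≠ 0 := hsplit.mapsTo (Set.mk_mem_prod hkM hs)
    have h2 : -((k:ℤ) • s) ≠ 0 := neg_ne_zero.mpr hks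
    obtain ⟨⟨m', s'⟩, hp, he⟩ := hsplit.surjOn h2
    have hm' : m' ∈ M := hp.1
    have hs' : s' ∈ S := hp.2
    simp only at he
    by_cases hmk : m' = (k:ℤ)
    · have heq : (k:ℤ) • s' = (k:ℤ) • (-s) := by
        rw [smul_neg, ← he, hmk]
      have := hinj _ _ heq.symm
      rw [this]; exact hs'
    · exfalso
      have hm'lt : m' ≤ (k:ℤ) - 1 := by
        rcases lt_or_eq_of_le hm'.2.1 with h | h
        · linarith
        · exact absurd h hmk
      have hmneg : -m' ∈ M := by
        refine ⟨by linarith, by linarith [hm'.1], neg_ne_zero.mpr hm'.2.2⟩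
      have heq : (fun p : ℤ × G => p.1 • p.2) (-m', s')
          = (fun p : ℤ × G => p.1 • p.2) ((k:ℤ), s) := by
        simp only [neg_smul, he, neg_neg]
      have hpe := hsplit.injOn (Set.mk_mem_prod hmneg hs') (Set.mk_mem_prod hkM hs) heq
      have : -m' = (k:ℤ) := congrArg Prod.fst hpe
      linarith [hm'.1]
  -- S is nonempty
  obtain ⟨g, hg⟩ : ∃ g : G, g ≠ 0 := Fintype.exists_ne_of_one_lt_card hG 0
  obtain ⟨⟨m, s⟩, hpmem, _⟩ := hsplit.surjOn hg
  have hsS : s ∈ S := hpmem.2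
  have hmsS : -s ∈ S := hneg s hsS
  have heq : (fun p : ℤ × G => p.1 • p.2) ((1:ℤ), s)
      = (fun p : ℤ × G => p.1 • p.2) ((-1:ℤ), -s) := by simp
  have hpe := hsplit.injOn (Set.mk_mem_prod h1M hsS) (Set.mk_mem_prod hm1M hmsS) heq
  have : (1:ℤ) = -1 := congrArg Prod.fst hpe
  norm_num at this
end

section
/- Let k ≥ 2 and q > 1 be integers and let M = [-(k-1), k]* = {m ∈ ℤ : -(k-1) ≤ m ≤ k, m ≠ 0}. Then there is no non-singular splitting of ℤ/qℤ by M; i.e., there is no set S ⊆ ℤ/qℤ such that M and S split ℤ/qℤ and gcd(q, m) = 1 for all m ∈ M. -/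
theorem stmt11 (k q : ℕ) (hk : 2 ≤ k) (hq : 1 < q) :
    ¬ ∃ S : Set (ZMod q),
      Splits {m : ℤ | -((k : ℤ) - 1) ≤ m ∧ m ≤ k ∧ m ≠ 0} S ∧
      ∀ m ∈ {m : ℤ | -((k : ℤ) - 1) ≤ m ∧ m ≤ k ∧ m ≠ 0}, Int.gcd (q : ℤ) m = 1 := by
  haveI : Fact (1 < q) := ⟨hq⟩
  rintro ⟨S, hbij, hgcd⟩
  set M : Set ℤ := {m : ℤ | -((k : ℤ) - 1) ≤ m ∧ m ≤ k ∧ m ≠ 0} with hM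
  have hkk : (2 : ℤ) ≤ (k : ℤ) := by exact_mod_cast hk
  have hkM : (k : ℤ) ∈ M := by
    constructor
    · linarith
    · exact ⟨le_refl _, by positivity⟩
  have h1M : (1 : ℤ) ∈ M := ⟨by linarith, by linarith, one_ne_zero⟩
  have hm1M : (-1 : ℤ) ∈ M := ⟨by linarith, by linarith, by norm_num⟩
  -- k is a unit in ZMod q
  have hkunit : IsUnit ((k : ℤ) : ZMod q) := by
    have := hgcd (k : ℤ) hkM
    have h : Nat.Coprime q k := by
      unfold Nat.Coprime
      have : Int.gcd (q : ℤ) (k : ℤ) = Nat.gcd q k := Int.gcd_natCast_natCast q k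
      omega
    have := (ZMod.isUnit_iff_coprime k q).mpr h.symm
    simpa using this
  -- S is nonempty: get some s
  have h1ne : (1 : ZMod q) ≠ 0 := one_ne_zero
  obtain ⟨⟨m, s⟩, ⟨hmM, hsS⟩, _⟩ := hbij.surjOn h1ne
  -- s ≠ 0
  have hs0 : s ≠ 0 := by
    have := hbij.mapsTo (Set.mk_mem_prod h1M hsS)
    simpa using this
  -- k • s ≠ 0
  have hks : (k : ℤ) • s ≠ 0 := by
    intro h
    rw [zsmul_eq_mul] at h
    exact hs0 (by
      have := hkunit.mul_right_eq_zero.mp h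
      exact this)
  have hnks : -((k : ℤ) • s) ≠ 0 := neg_ne_zero.mpr hks
  -- cover -k•s
  obtain ⟨⟨m', s'⟩, ⟨hm'M, hs'S⟩, heq⟩ := hbij.surjOn hnks
  simp only at heq
  -- show m' = k
  have hm'k : m' = (k : ℤ) := by
    by_contra hne
    have hnegM : -m' ∈ M := by
      obtain ⟨ha, hb, hc⟩ := hm'M
      have : m' ≤ (k : ℤ) - 1 := by
        rcases lt_or_eq_of_le hb with h | h
        · omega
        · exact absurd h hne
      exact ⟨by linarith, by linarith, neg_ne_zero.mpr hc⟩
    have heq2 : (-m') • s' = (k : ℤ) • s := by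
      rw [neg_zsmul, heq, neg_neg]
    have := hbij.injOn (Set.mk_mem_prod hnegM hs'S) (Set.mk_mem_prod hkM hsS) heq2
    have : -m' = (k : ℤ) := congrArg Prod.fst this
    obtain ⟨_, hb, _⟩ := hm'M
    have hm'lt : m' ≤ (k : ℤ) - 1 := by
      rcases lt_or_eq_of_le hb with h | h
      · omega
      · exact absurd h hne
    omega
  subst hm'k
  -- k • s' = -(k • s) ⟹ s' = -s
  have hs' : s' = -s := by
    have : ((k : ℤ) : ZMod q) * (s' + s) = 0 := by
      rw [mul_add]
      rw [zsmul_eq_mul] at heq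
      rw [heq, zsmul_eq_mul]
      ring
    have := hkunit.mul_right_eq_zero.mp this
    linear_combination this
  subst hs'
  -- now -s ∈ S and s ∈ S: s = 1•s = (-1)•(-s)
  have heq3 : ((-1 : ℤ)) • (-s) = (1 : ℤ) • s := by simp
  have := hbij.injOn (Set.mk_mem_prod hm1M hs'S) (Set.mk_mem_prod h1M hsS) heq3
  have : (-1 : ℤ) = 1 := congrArg Prod.fst this
  norm_num at this
end

section
/- Let w ≥ 1 and q > 1 be integers and let M = [-(2^w - 1), 2^w]* = {m ∈ ℤ : -(2^w - 1) ≤ m ≤ 2^w, m ≠ 0}. If there exists a set S ⊆ ℤ/qℤ such that M and S split ℤ/qℤ, then q = 2^{r(w+1)} for some integer r ≥ 1. -/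
namespace SplitAux

open Finset

def MSet (w : ℕ) : Set ℤ := {m : ℤ | -((2 : ℤ) ^ w - 1) ≤ m ∧ m ≤ 2 ^ w ∧ m ≠ 0}

noncomputable def Mf (w : ℕ) : Finset ℤ := (Finset.Icc (-((2:ℤ) ^ w - 1)) (2 ^ w)).erase 0

lemma mem_Mf {w : ℕ} {m : ℤ} : m ∈ Mf w ↔ m ∈ MSet w := by
  simp only [Mf, MSet, Finset.mem_erase, Finset.mem_Icc, Set.mem_setOf_eq]
  tauto

lemma Icc_double (k : ℕ) (F : ℤ → ℤ) :
    ∑ c ∈ Finset.Icc (-((2:ℤ) ^ (k+1) - 1)) (2 ^ (k+1)), F c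
      = (∑ c ∈ Finset.Icc (-((2:ℤ) ^ k - 1)) (2 ^ k), F (2 * c))
        + ∑ c ∈ Finset.Icc (-((2:ℤ) ^ k - 1)) (2 ^ k), F (2 * c - 1) := by
  have hp : (2:ℤ) ^ (k+1) = 2 * 2 ^ k := by ring
  set I := Finset.Icc (-((2:ℤ) ^ k - 1)) (2 ^ k) with hIdef
  have h1 : ∑ c ∈ I.image (fun c => 2 * c), F c = ∑ c ∈ I, F (2 * c) :=
    Finset.sum_image (by intro a _ b _ h; have h' : 2 * a = 2 * b := h; omega)
  have h2 : ∑ c ∈ I.image (fun c => 2 * c - 1), F c = ∑ c ∈ I, F (2 * c - 1) :=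
    Finset.sum_image (by intro a _ b _ h; have h' : 2 * a - 1 = 2 * b - 1 := h; omega)
  have hdis : Disjoint (I.image (fun c => 2 * c)) (I.image (fun c => 2 * c - 1)) := by
    rw [Finset.disjoint_left]
    intro c hc hc'
    simp only [Finset.mem_image, Finset.mem_Icc, hIdef] at hc hc'
    obtain ⟨d, _, rfl⟩ := hc
    obtain ⟨d', _, h⟩ := hc'
    omega
  have hun : Finset.Icc (-((2:ℤ) ^ (k+1) - 1)) (2 ^ (k+1))
      = (I.image (fun c => 2 * c)) ∪ (I.image (fun c => 2 * c - 1)) := by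
    ext c
    simp only [Finset.mem_union, Finset.mem_image, Finset.mem_Icc, hIdef]
    constructor
    · intro ⟨ha, hb⟩
      rcases Int.even_or_odd c with ⟨d, hd⟩ | ⟨d, hd⟩
      · exact Or.inl ⟨d, by omega, by omega⟩
      · exact Or.inr ⟨d + 1, by omega, by omega⟩
    · rintro (⟨d, hd, rfl⟩ | ⟨d, hd, rfl⟩) <;> omega
  rw [hun, Finset.sum_union hdis, h1, h2]

lemma sum_neg_eq (w : ℕ) (F : ℤ → ℤ) :
    ∑ m ∈ Mf w, F (-m) = (∑ m ∈ Mf w, F m) - F (2 ^ w) + F (-(2 ^ w)) := by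
  have hB : (1:ℤ) ≤ 2 ^ w := one_le_pow₀ (by norm_num)
  set I := Finset.Icc (-((2:ℤ) ^ w - 1)) (2 ^ w) with hI
  set J := Finset.Icc (-(2:ℤ) ^ w) ((2:ℤ) ^ w - 1) with hJ
  have h0I : (0:ℤ) ∈ I := by simp only [hI, Finset.mem_Icc]; omega
  have step1 : ∑ m ∈ I, F (-m) = ∑ m ∈ J, F m := by
    apply Finset.sum_nbij' (i := fun m => -m) (j := fun m => -m)
    · intro a ha; simp only [hI, Finset.mem_Icc] at ha; simp only [hJ, Finset.mem_Icc]; omega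
    · intro a ha; simp only [hJ, Finset.mem_Icc] at ha; simp only [hI, Finset.mem_Icc]; omega
    · intro a _; omega
    · intro a _; omega
    · intro a _; rfl
  have hIn : Finset.Icc (-(2:ℤ) ^ w) ((2:ℤ) ^ w) = insert (-(2:ℤ)^w) I := by
    ext x; simp only [Finset.mem_Icc, Finset.mem_insert, hI]; omega
  have hJn : Finset.Icc (-(2:ℤ) ^ w) ((2:ℤ) ^ w) = insert ((2:ℤ)^w) J := by
    ext x; simp only [Finset.mem_Icc, Finset.mem_insert, hJ]; omega
  have hnm1 : (-(2:ℤ)^w) ∉ I := by simp only [hI, Finset.mem_Icc]; omega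
  have hnm2 : ((2:ℤ)^w) ∉ J := by simp only [hJ, Finset.mem_Icc]; omega
  have step2 : ∑ m ∈ J, F m = (∑ m ∈ I, F m) - F (2^w) + F (-(2^w)) := by
    have e1 : ∑ m ∈ Finset.Icc (-(2:ℤ) ^ w) ((2:ℤ) ^ w), F m = F (-(2:ℤ)^w) + ∑ m ∈ I, F m := by
      rw [hIn, Finset.sum_insert hnm1]
    have e2 : ∑ m ∈ Finset.Icc (-(2:ℤ) ^ w) ((2:ℤ) ^ w), F m = F ((2:ℤ)^w) + ∑ m ∈ J, F m := by
      rw [hJn, Finset.sum_insert hnm2]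
    omega
  have e3 : ∑ m ∈ Mf w, F (-m) = (∑ m ∈ I, F (-m)) - F 0 := by
    have := Finset.sum_erase_eq_sub (f := fun m => F (-m)) h0I
    exact this
  have e4 : ∑ m ∈ Mf w, F m = (∑ m ∈ I, F m) - F 0 := Finset.sum_erase_eq_sub h0I
  omega

lemma sum_card_filter {G : Type*} [DecidableEq G] (Mf' : Finset ℤ) (S' : Finset G)
    (P : ℤ → G → Prop) [∀ m s, Decidable (P m s)] :
    ∑ m ∈ Mf', (S'.filter (fun s => P m s)).card
      = ((Mf' ×ˢ S').filter (fun p : ℤ × G => P p.1 p.2)).card := by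
  rw [Finset.card_filter, Finset.sum_product]
  exact Finset.sum_congr rfl (fun m _ => Finset.card_filter _ _)

lemma zsmul_cast {q : ℕ} [NeZero q] (c : ℤ) (x : ZMod q) :
    c • x = ((c * (x.val : ℤ) : ℤ) : ZMod q) := by
  have hx : ((x.val : ℕ) : ZMod q) = x := ZMod.natCast_rightInverse x
  conv_lhs => rw [← hx]
  rw [zsmul_eq_mul]
  push_cast
  ring

lemma dvd_val_intCast_iff {q : ℕ} [NeZero q] {d : ℤ} (hd : d ∣ (q:ℤ)) (z : ℤ) :
    d ∣ (((z : ZMod q).val : ℤ)) ↔ d ∣ z := by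
  have hx : (((z : ZMod q).val : ℕ) : ZMod q) = (z : ZMod q) := ZMod.natCast_rightInverse _
  have h1 : ((((z : ZMod q).val : ℤ) - z : ℤ) : ZMod q) = 0 := by
    push_cast
    rw [hx]
    ring
  have h2 : (q:ℤ) ∣ (((z : ZMod q).val : ℤ) - z) := (ZMod.intCast_zmod_eq_zero_iff_dvd _ q).mp h1
  have h3 : d ∣ (((z : ZMod q).val : ℤ) - z) := dvd_trans hd h2
  constructor
  · intro h
    have := dvd_sub h h3
    simpa using this
  · intro h
    have := dvd_add h3 h
    simpa using this

lemma pow2_dvd_shift_iff {e i : ℕ} {u X : ℤ} (hu : Odd u) :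
    (2:ℤ) ^ e ∣ (2 ^ i * u) * X ↔ (2:ℤ) ^ (e - i) ∣ X := by
  rcases le_or_gt e i with h | h
  · have he0 : e - i = 0 := by omega
    rw [he0, pow_zero]
    simp only [one_dvd, iff_true]
    exact dvd_trans (pow_dvd_pow 2 h) ⟨u * X, by ring⟩
  · obtain ⟨k, hk⟩ := hu
    have hcop : IsCoprime ((2:ℤ) ^ (e - i)) u :=
      IsCoprime.pow_left ⟨-k, 1, by omega⟩
    have he : e = i + (e - i) := by omega
    constructor
    · intro hdvd
      have h1 : (2:ℤ) ^ i * 2 ^ (e-i) ∣ 2 ^ i * (u * X) := by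
        rw [← pow_add, ← he]
        have : (2:ℤ) ^ i * u * X = 2 ^ i * (u * X) := by ring
        rwa [← this]
      have h2 : (2:ℤ) ^ (e-i) ∣ u * X :=
        (mul_dvd_mul_iff_left (a := (2:ℤ)^i) (by positivity)).mp h1
      exact hcop.dvd_of_dvd_mul_left h2
    · intro hdvd
      calc (2:ℤ) ^ e = 2 ^ i * 2 ^ (e - i) := by rw [← pow_add, ← he]
      _ ∣ (2 ^ i * u) * X := mul_dvd_mul (dvd_mul_right _ _) hdvd

lemma mem_H_iff {q : ℕ} [NeZero q] {e : ℕ} (hdvd : (2:ℕ)^e ∣ q) (c : ℤ) (x : ZMod q) :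
    (2:ℕ) ^ e ∣ (c • x).val ↔ (2:ℤ) ^ e ∣ c * (x.val : ℤ) := by
  have h1 : ((2:ℕ)^e ∣ (c • x).val) ↔ ((2:ℤ)^e ∣ (((c • x).val : ℕ) : ℤ)) := by
    constructor
    · intro h; exact_mod_cast h
    · intro h; exact_mod_cast h
  rw [h1, zsmul_cast c x]
  exact dvd_val_intCast_iff (by exact_mod_cast hdvd) _

lemma pow2_cancel_bound {a w : ℕ} {m X : ℤ} (hm0 : m ≠ 0) (hmb : m.natAbs ≤ 2 ^ w)
    (h : (2:ℤ) ^ a ∣ m * X) : (2:ℤ) ^ (a - w) ∣ X := by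
  have h1 : (2 ^ a : ℕ) ∣ m.natAbs * X.natAbs := by
    have h2 := Int.natAbs_dvd_natAbs.mpr h
    simpa [Int.natAbs_mul, Int.natAbs_pow] using h2
  rcases Nat.eq_zero_or_pos X.natAbs with h0 | hXpos
  · have : X = 0 := Int.natAbs_eq_zero.mp h0
    simp [this]
  have hm' : m.natAbs ≠ 0 := by simpa using hm0
  have hf : a ≤ (m.natAbs * X.natAbs).factorization 2 :=
    (Nat.Prime.pow_dvd_iff_le_factorization Nat.prime_two
      (by positivity)).mp h1
  rw [Nat.factorization_mul hm' (by omega)] at hf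
  simp only [Finsupp.coe_add, Pi.add_apply] at hf
  have hfm : m.natAbs.factorization 2 ≤ w := by
    by_contra hgt
    push_neg at hgt
    have hd : 2 ^ (w+1) ∣ m.natAbs := dvd_trans (pow_dvd_pow 2 hgt) (Nat.ordProj_dvd _ 2)
    have hle := Nat.le_of_dvd (by omega) hd
    have : (2:ℕ) ^ w < 2 ^ (w+1) := Nat.pow_lt_pow_right (by norm_num) (by omega)
    omega
  have hfx : a - w ≤ X.natAbs.factorization 2 := by omega
  have h4 : (2 ^ (a - w) : ℕ) ∣ X.natAbs :=
    (Nat.Prime.pow_dvd_iff_le_factorization Nat.prime_two (by omega)).mpr hfx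
  have h4' : ((2:ℤ) ^ (a-w)).natAbs ∣ X.natAbs := by
    simpa [Int.natAbs_pow] using h4
  exact Int.natAbs_dvd_natAbs.mp h4'

lemma card_H {q : ℕ} [NeZero q] {e : ℕ} (hdvd : 2 ^ e ∣ q) :
    (Finset.univ.filter (fun x : ZMod q => 2 ^ e ∣ x.val)).card = q / 2 ^ e := by
  have hq0 : q ≠ 0 := NeZero.ne q
  have hpe : 0 < 2 ^ e := by positivity
  rw [← Finset.card_range (q / 2 ^ e)]
  apply Finset.card_bij' (i := fun (x : ZMod q) _ => x.val / 2 ^ e)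
    (j := fun (k : ℕ) _ => ((2 ^ e * k : ℕ) : ZMod q))
  · intro x hx
    simp only [Finset.mem_filter] at hx
    simp only [Finset.mem_range]
    exact Nat.div_lt_div_of_lt_of_dvd hdvd (ZMod.val_lt x)
  · intro k hk
    simp only [Finset.mem_range] at hk
    simp only [Finset.mem_filter, Finset.mem_univ, true_and]
    rw [ZMod.val_natCast]
    have : 2 ^ e ∣ 2 ^ e * k := dvd_mul_right _ _
    exact (Nat.dvd_mod_iff hdvd).mpr this
  · intro x hx
    simp only [Finset.mem_filter] at hx
    rw [Nat.mul_div_cancel' hx.2]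
    exact ZMod.natCast_rightInverse x
  · intro k hk
    simp only [Finset.mem_range] at hk
    rw [ZMod.val_natCast]
    have hlt : 2 ^ e * k < q := by
      calc 2 ^ e * k < 2 ^ e * (q / 2 ^ e) := by
            exact (Nat.mul_lt_mul_left hpe).mpr hk
      _ = q := Nat.mul_div_cancel' hdvd
    rw [Nat.mod_eq_of_lt hlt]
    exact Nat.mul_div_cancel_left k hpe

lemma geom_aux : ∀ w : ℕ, ∑ i ∈ Finset.range w, (2:ℤ) ^ (w - i) = 2 ^ (w+1) - 2 := by
  intro w
  induction w with
  | zero => simp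
  | succ w ih =>
    rw [Finset.sum_range_succ']
    have hc : ∀ i ∈ Finset.range w, (2:ℤ) ^ (w + 1 - (i+1)) = 2 ^ (w - i) := by
      intro i hi; congr 1; omega
    rw [Finset.sum_congr rfl hc, ih]
    have h1 : (2:ℤ) ^ (w+2) = 2 * 2 ^ (w+1) := by ring
    have h2 : (2:ℤ) ^ (w+1-0) = 2 ^ (w+1) := by norm_num
    rw [h2]
    omega

lemma val_add_dvd {q : ℕ} [NeZero q] {d : ℕ} (hd : d ∣ q) {x y : ZMod q}
    (hx : d ∣ x.val) (hy : d ∣ y.val) : d ∣ (x + y).val := by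
  rw [ZMod.val_add]
  exact (Nat.dvd_mod_iff hd).mpr (dvd_add hx hy)

lemma val_neg_dvd {q : ℕ} [NeZero q] {d : ℕ} (hd : d ∣ q) {x : ZMod q}
    (hx : d ∣ x.val) : d ∣ (-x).val := by
  have h0 : ((-x) + x).val = 0 := by rw [neg_add_cancel, ZMod.val_zero]
  rw [ZMod.val_add] at h0
  have hq : q ∣ (-x).val + x.val := Nat.dvd_of_mod_eq_zero h0
  have hdd : d ∣ (-x).val + x.val := dvd_trans hd hq
  have he : (-x).val = ((-x).val + x.val) - x.val := by omega
  rw [he]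
  exact Nat.dvd_sub hdd hx

lemma card_pairs {w : ℕ} {G : Type*} [AddCommGroup G] [DecidableEq G]
    {S : Set G} (hs : Splits (MSet w) S) (S' : Finset G) (hS' : ∀ x, x ∈ S' ↔ x ∈ S)
    (T : Finset G) :
    ((Mf w ×ˢ S').filter (fun p : ℤ × G => p.1 • p.2 ∈ T)).card = (T.erase 0).card := by
  apply Finset.card_bij (fun p _ => p.1 • p.2)
  · intro p hp
    simp only [Finset.mem_filter, Finset.mem_product] at hp
    obtain ⟨⟨hm, hsS⟩, hT⟩ := hp
    have hne : p.1 • p.2 ≠ 0 := hs.mapsTo (Set.mem_prod.mpr ⟨mem_Mf.mp hm, (hS' _).mp hsS⟩)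
    exact Finset.mem_erase.mpr ⟨hne, hT⟩
  · intro p1 h1 p2 h2 heq
    simp only [Finset.mem_filter, Finset.mem_product] at h1 h2
    exact hs.injOn (Set.mem_prod.mpr ⟨mem_Mf.mp h1.1.1, (hS' _).mp h1.1.2⟩)
      (Set.mem_prod.mpr ⟨mem_Mf.mp h2.1.1, (hS' _).mp h2.1.2⟩) heq
  · intro t ht
    obtain ⟨htne, htT⟩ := Finset.mem_erase.mp ht
    obtain ⟨p, hp, hpe⟩ := hs.surjOn (show t ∈ {g : G | g ≠ 0} from htne)
    refine ⟨p, Finset.mem_filter.mpr ⟨Finset.mem_product.mpr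
      ⟨mem_Mf.mpr hp.1, (hS' _).mpr hp.2⟩, ?_⟩, hpe⟩
    show p.1 • p.2 ∈ T
    rw [show p.1 • p.2 = t from hpe]
    exact htT

lemma odd_case {G : Type*} [AddCommGroup G] [Finite G] {w : ℕ} (hw : 1 ≤ w)
    (inj2 : ∀ x : G, x + x = 0 → x = 0)
    {S : Set G} (hs : Splits (MSet w) S) (x : G) : x = 0 := by
  classical
  cases nonempty_fintype G
  by_contra hx
  have h2w : (2:ℤ) ≤ 2 ^ w := by
    calc (2:ℤ) = 2 ^ 1 := (pow_one 2).symm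
    _ ≤ 2 ^ w := pow_le_pow_right₀ (by norm_num) hw
  have h1M : (1:ℤ) ∈ MSet w := ⟨by omega, by omega, by omega⟩
  have hm1M : (-1:ℤ) ∈ MSet w := ⟨by omega, by omega, by omega⟩
  have h2wM : ((2:ℤ)^w) ∈ MSet w := ⟨by omega, le_refl _, by omega⟩
  have hpow : ∀ (k : ℕ) (y : G), (2:ℤ) ^ k • y = 0 → y = 0 := by
    intro k
    induction k with
    | zero => intro y hy; simpa using hy
    | succ k ih =>
      intro y hy
      have h1 : (2:ℤ) ^ k • ((2:ℤ) • y) = 0 := by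
        rw [smul_smul, ← pow_succ]
        exact hy
      have h2 : (2:ℤ) • y = 0 := ih _ h1
      apply inj2
      rw [← two_zsmul]
      exact h2
  set S' := (Set.toFinite S).toFinset with hS'def
  have hS' : ∀ y, y ∈ S' ↔ y ∈ S := fun y => Set.Finite.mem_toFinset _
  obtain ⟨p, hp, hpe⟩ := hs.surjOn (show x ∈ {g : G | g ≠ 0} from hx)
  have hsS : p.2 ∈ S := hp.2
  set s := p.2 with hsdef
  set cnt : ℤ → G → ℤ := fun c g => ((S'.filter (fun t => c • t = g)).card : ℤ) with hcnt
  have count_id : ∀ g : G, g ≠ 0 → ∑ m ∈ Mf w, cnt m g = 1 := by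
    intro g hg
    have h1 := sum_card_filter (Mf w) S' (fun m t => m • t = g)
    have h2 := card_pairs hs S' hS' ({g} : Finset G)
    have h3 : ((Mf w ×ˢ S').filter (fun p : ℤ × G => p.1 • p.2 ∈ ({g} : Finset G)))
        = ((Mf w ×ˢ S').filter (fun p : ℤ × G => p.1 • p.2 = g)) := by
      apply Finset.filter_congr
      intro p _
      simp
    have h4 : (({g} : Finset G).erase 0).card = 1 := by
      rw [Finset.erase_eq_of_notMem (by simpa using (Ne.symm hg))]
      simp
    rw [h3, h4] at h2
    simp only [hcnt]
    rw [← Nat.cast_sum]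
    rw [h1, h2]
    norm_num
  have count_neg : ∀ g : G, g ≠ 0 → ∑ m ∈ Mf w, cnt (-m) g = 1 := by
    intro g hg
    have hconv : ∀ m : ℤ, cnt (-m) g = cnt m (-g) := by
      intro m
      simp only [hcnt]
      have hfc : (S'.filter (fun t => (-m) • t = g)) = (S'.filter (fun t => m • t = -g)) := by
        apply Finset.filter_congr
        intro t _
        simp only [neg_smul, neg_eq_iff_eq_neg, eq_iff_iff]
      rw [hfc]
    rw [Finset.sum_congr rfl (fun m _ => hconv m)]
    exact count_id (-g) (by simpa using hg)
  set g₀ := ((2:ℤ)^w) • s with hg₀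
  have hg₀ne : g₀ ≠ 0 := hs.mapsTo
    (show (((2:ℤ)^w, s) : ℤ × G) ∈ (MSet w) ×ˢ S from Set.mem_prod.mpr ⟨h2wM, hsS⟩)
  have hpair := sum_neg_eq w (fun c => cnt c g₀)
  rw [count_id g₀ hg₀ne] at hpair
  have hkey : cnt ((2:ℤ)^w) g₀ = cnt (-((2:ℤ)^w)) g₀ := by
    have := count_neg g₀ hg₀ne
    omega
  have hpos : 1 ≤ cnt ((2:ℤ)^w) g₀ := by
    have hmem : s ∈ S'.filter (fun t => ((2:ℤ)^w) • t = g₀) := by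
      rw [Finset.mem_filter]
      exact ⟨(hS' s).mpr hsS, rfl⟩
    have := Finset.card_pos.mpr ⟨s, hmem⟩
    simp only [hcnt]
    exact_mod_cast this
  have hpos2 : 0 < (S'.filter (fun t => (-((2:ℤ)^w)) • t = g₀)).card := by
    have : (0:ℤ) < cnt (-((2:ℤ)^w)) g₀ := by omega
    simp only [hcnt] at this
    exact_mod_cast this
  obtain ⟨s', hs'⟩ := Finset.card_pos.mp hpos2
  rw [Finset.mem_filter] at hs'
  have hs'S : s' ∈ S := (hS' s').mp hs'.1
  have hsum : ((2:ℤ)^w) • (s + s') = 0 := by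
    rw [smul_add]
    have h5 : ((2:ℤ)^w) • s' = -g₀ := by
      have := hs'.2
      rwa [neg_smul, neg_eq_iff_eq_neg] at this
    rw [h5, hg₀]
    exact add_neg_cancel _
  have hss' : s + s' = 0 := hpow w _ hsum
  have hs'eq : s' = -s := eq_neg_of_add_eq_zero_right hss'
  have hmemA : ((1:ℤ), -s) ∈ (MSet w) ×ˢ S := Set.mem_prod.mpr ⟨h1M, hs'eq ▸ hs'S⟩
  have hmemB : ((-1:ℤ), s) ∈ (MSet w) ×ˢ S := Set.mem_prod.mpr ⟨hm1M, hsS⟩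
  have heqim : (fun p : ℤ × G => p.1 • p.2) ((1:ℤ), -s)
      = (fun p : ℤ × G => p.1 • p.2) ((-1:ℤ), s) := by
    simp
  have := hs.injOn hmemA hmemB heqim
  have h1 : (1:ℤ) = -1 := congrArg Prod.fst this
  omega

end SplitAux

theorem stmt12 (w q : ℕ) (hw : 1 ≤ w) (hq : 1 < q)
    (S : Set (ZMod q))
    (hsplit : Splits {m : ℤ | -((2 : ℤ) ^ w - 1) ≤ m ∧ m ≤ 2 ^ w ∧ m ≠ 0} S) :
    ∃ r : ℕ, 1 ≤ r ∧ q = 2 ^ (r * (w + 1)) := by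
  classical
  haveI : NeZero q := ⟨by omega⟩
  haveI : Fact (1 < q) := ⟨hq⟩
  have hsp : Splits (SplitAux.MSet w) S := hsplit
  have hq0 : q ≠ 0 := by omega
  set n := w + 1 with hn
  set a := q.factorization 2 with ha
  set b := q / 2 ^ a with hbdef
  have hab : 2 ^ a * b = q := Nat.ordProj_mul_ordCompl_eq_self q 2
  have hbodd : ¬ 2 ∣ b := Nat.not_dvd_ordCompl Nat.prime_two hq0
  have h2w : (2:ℤ) ≤ 2 ^ w := by
    calc (2:ℤ) = 2 ^ 1 := (pow_one 2).symm
    _ ≤ 2 ^ w := pow_le_pow_right₀ (by norm_num) hw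
  have h1M : (1:ℤ) ∈ SplitAux.MSet w := ⟨by omega, by omega, by omega⟩
  have hSne : ∀ s ∈ S, s ≠ 0 := by
    intro s hsS
    have := hsp.mapsTo
      (show (((1:ℤ), s) : ℤ × ZMod q) ∈ (SplitAux.MSet w) ×ˢ S from Set.mem_prod.mpr ⟨h1M, hsS⟩)
    simpa using this
  by_cases hq2 : a = 0
  · -- odd q : impossible
    exfalso
    have hqodd : ¬ 2 ∣ q := by
      rw [← hab, hq2]
      simpa using hbodd
    have hinj2 : ∀ x : ZMod q, x + x = 0 → x = 0 := by
      intro x hxx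
      have hv : (x.val + x.val) % q = 0 := by
        rw [← ZMod.val_add, hxx, ZMod.val_zero]
      have hdvd : q ∣ 2 * x.val := by
        have h1 := Nat.dvd_of_mod_eq_zero hv
        rwa [show x.val + x.val = 2 * x.val from by ring] at h1
      have hcop : Nat.Coprime q 2 :=
        ((Nat.Prime.coprime_iff_not_dvd Nat.prime_two).mpr hqodd).symm
      have hqx : q ∣ x.val := hcop.dvd_of_dvd_mul_left hdvd
      have hv0 : x.val = 0 := Nat.eq_zero_of_dvd_of_lt hqx (ZMod.val_lt x)
      exact (ZMod.val_eq_zero x).mp hv0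
    have h10 := SplitAux.odd_case hw hinj2 hsp (1 : ZMod q)
    exact one_ne_zero h10
  · -- q even
    have ha1 : 1 ≤ a := by omega
    have hdvdq : ∀ e, e ≤ a → (2 ^ e : ℕ) ∣ q := fun e he =>
      dvd_trans (pow_dvd_pow 2 he) ⟨b, hab.symm⟩
    set S' := (Set.toFinite S).toFinset with hS'def
    have hS' : ∀ y, y ∈ S' ↔ y ∈ S := fun y => Set.Finite.mem_toFinset _
    set sfun : ℕ → ℤ := fun k => ((S'.filter (fun s : ZMod q => 2 ^ k ∣ s.val)).card : ℤ)
      with hsfun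
    set Hfin : ℕ → Finset (ZMod q) :=
      fun e => Finset.univ.filter (fun x : ZMod q => 2 ^ e ∣ x.val) with hHfin
    have hzeroH : ∀ e, (0 : ZMod q) ∈ Hfin e := by
      intro e
      simp only [hHfin, Finset.mem_filter, Finset.mem_univ, true_and, ZMod.val_zero]
      exact dvd_zero _
    have hcardH : ∀ e, e ≤ a → (Hfin e).card = q / 2 ^ e := fun e he =>
      SplitAux.card_H (hdvdq e he)
    set cnt : ℕ → ℤ → ℤ :=
      fun e c => ((S'.filter (fun s : ZMod q => c • s ∈ Hfin e)).card : ℤ) with hcnt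
    have hmemH : ∀ (e : ℕ), e ≤ a → ∀ (c : ℤ) (x : ZMod q),
        (c • x ∈ Hfin e ↔ (2:ℤ) ^ e ∣ c * (x.val : ℤ)) := by
      intro e he c x
      simp only [hHfin, Finset.mem_filter, Finset.mem_univ, true_and]
      exact SplitAux.mem_H_iff (hdvdq e he) c x
    have cnt_odd : ∀ e, e ≤ a → ∀ (i : ℕ) (u : ℤ), Odd u →
        cnt e ((2:ℤ) ^ i * u) = sfun (e - i) := by
      intro e he i u hu
      simp only [hcnt, hsfun]
      have hfil : (S'.filter (fun s : ZMod q => ((2:ℤ) ^ i * u) • s ∈ Hfin e))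
          = (S'.filter (fun s : ZMod q => 2 ^ (e - i) ∣ s.val)) := by
        apply Finset.filter_congr
        intro s _
        rw [hmemH e he, SplitAux.pow2_dvd_shift_iff hu]
        constructor
        · intro h; exact_mod_cast h
        · intro h; exact_mod_cast h
      rw [hfil]
    have sumM : ∀ e, e ≤ a → ∑ m ∈ SplitAux.Mf w, cnt e m = ((q / 2 ^ e : ℕ) : ℤ) - 1 := by
      intro e he
      have h1 := SplitAux.sum_card_filter (SplitAux.Mf w) S' (fun m s => m • s ∈ Hfin e)
      have h2 := SplitAux.card_pairs hsp S' hS' (Hfin e)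
      have h3 : ((Hfin e).erase 0).card = (Hfin e).card - 1 :=
        Finset.card_erase_of_mem (hzeroH e)
      have h4 : 1 ≤ (Hfin e).card := Finset.card_pos.mpr ⟨0, hzeroH e⟩
      have h5 : 1 ≤ q / 2 ^ e := by rw [← hcardH e he]; exact h4
      simp only [hcnt]
      rw [← Nat.cast_sum, h1, h2, h3, hcardH e he, Nat.cast_sub h5]
      norm_num
    have hcardIcc : ∀ k : ℕ, ((Finset.Icc (-((2:ℤ) ^ k - 1)) (2 ^ k)).card : ℤ) = 2 ^ (k+1) := by
      intro k
      rw [Int.card_Icc]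
      have h2 : (1:ℤ) ≤ 2 ^ k := one_le_pow₀ (by norm_num)
      have h4 : (2:ℤ) ^ (k+1) = 2 * 2 ^ k := by ring
      rw [Int.toNat_of_nonneg (by omega)]
      omega
    -- the master counting identity
    have Eqe : ∀ e, e ≤ a → ((q / 2 ^ e : ℕ) : ℤ) - 1
        = sfun (e - w) + ∑ i ∈ Finset.range w, 2 ^ (w - i) * sfun (e - i) := by
      intro e he
      have hcnt0 : cnt e 0 = sfun 0 := by
        simp only [hcnt, hsfun]
        have hfil : (S'.filter (fun s : ZMod q => (0:ℤ) • s ∈ Hfin e))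
            = (S'.filter (fun s : ZMod q => 2 ^ 0 ∣ s.val)) := by
          apply Finset.filter_congr
          intro s _
          simp only [zero_smul, eq_iff_iff, pow_zero]
          constructor
          · intro _; exact one_dvd _
          · intro _; exact hzeroH e
        rw [hfil]
      set A : ℕ → ℤ := fun i =>
        ∑ c ∈ Finset.Icc (-((2:ℤ) ^ (w - i) - 1)) (2 ^ (w - i)), cnt e ((2:ℤ) ^ i * c) with hA
      have hstep : ∀ i, i < w → A i = A (i + 1) + 2 ^ (w - i) * sfun (e - i) := by
        intro i hi
        have hwi : w - i = (w - i - 1) + 1 := by omega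
        have hw2 : w - (i+1) = w - i - 1 := by omega
        simp only [hA]
        rw [hwi, SplitAux.Icc_double (w - i - 1) (fun c => cnt e ((2:ℤ) ^ i * c)), hw2]
        congr 1
        · apply Finset.sum_congr rfl
          intro c _
          have hmul : (2:ℤ) ^ i * (2 * c) = 2 ^ (i+1) * c := by ring
          rw [hmul]
        · have heach : ∀ c ∈ Finset.Icc (-((2:ℤ) ^ (w-i-1) - 1)) (2 ^ (w-i-1)),
              cnt e ((2:ℤ) ^ i * (2 * c - 1)) = sfun (e - i) := fun c _ =>
            cnt_odd e he i (2*c - 1) ⟨c - 1, by ring⟩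
          rw [Finset.sum_congr rfl heach, Finset.sum_const, nsmul_eq_mul, hcardIcc (w-i-1)]
      have htel : ∀ t, t ≤ w → A 0 = A t + ∑ i ∈ Finset.range t, 2 ^ (w - i) * sfun (e - i) := by
        intro t
        induction t with
        | zero => intro _; simp
        | succ t ih =>
          intro ht
          rw [Finset.sum_range_succ, ih (by omega), hstep t (by omega)]
          ring
      have hA0 : A 0 = sfun 0 + (((q / 2 ^ e : ℕ) : ℤ) - 1) := by
        simp only [hA, pow_zero, one_mul, Nat.sub_zero]
        have h0mem : (0:ℤ) ∈ Finset.Icc (-((2:ℤ) ^ w - 1)) (2 ^ w) := by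
          simp only [Finset.mem_Icc]
          omega
        rw [← Finset.sum_erase_add _ _ h0mem]
        have hMf : (Finset.Icc (-((2:ℤ) ^ w - 1)) (2 ^ w)).erase 0 = SplitAux.Mf w := rfl
        rw [hMf, sumM e he, hcnt0]
        ring
      have hAw : A w = sfun 0 + sfun (e - w) := by
        simp only [hA, Nat.sub_self, pow_zero]
        have hIcc01 : Finset.Icc (-((1:ℤ) - 1)) (1:ℤ) = {0, 1} := by
          ext c
          simp only [Finset.mem_Icc, Finset.mem_insert, Finset.mem_singleton]
          omega
        rw [hIcc01, Finset.sum_insert (by simp), Finset.sum_singleton]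
        have t1 : cnt e ((2:ℤ)^w * 0) = sfun 0 := by rw [mul_zero]; exact hcnt0
        have t2 : cnt e ((2:ℤ)^w * 1) = sfun (e - w) := cnt_odd e he w 1 ⟨0, by ring⟩
        rw [t1, t2]
      have hfin := htel w (le_refl w)
      rw [hA0, hAw] at hfin
      linarith [hfin]
    have Qrel : ∀ e, 1 ≤ e → e ≤ a →
        ((q / 2 ^ (e-1) : ℕ) : ℤ) = 2 * ((q / 2 ^ e : ℕ) : ℤ) := by
      intro e h1 h2
      obtain ⟨k, hk⟩ := hdvdq e h2
      have he' : (2:ℕ) ^ e = 2 ^ (e-1) * 2 := by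
        rw [← pow_succ]
        congr 1
        omega
      have ha' : q / 2 ^ (e-1) = 2 * k := by
        rw [hk, he', mul_assoc]
        exact Nat.mul_div_cancel_left _ (by positivity)
      have hb' : q / 2 ^ e = k := by
        rw [hk]
        exact Nat.mul_div_cancel_left k (by positivity)
      rw [ha', hb']
      push_cast
      ring
    have Rrec : ∀ e, 1 ≤ e → e ≤ a → sfun (e - n) = 2 ^ n * sfun e + 1 := by
      intro e h1 h2
      have E1 := Eqe e h2
      have E2 := Eqe (e-1) (by omega)
      have hQ := Qrel e h1 h2
      have hE2w : sfun (e - 1 - w) = sfun (e - n) := by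
        congr 1
        omega
      have hrange : (w - 1) + 1 = w := by omega
      have hBs : 2 * (∑ i ∈ Finset.range w, (2:ℤ) ^ (w - i) * sfun (e - i))
          = 2 ^ n * sfun e + (∑ i ∈ Finset.range w, (2:ℤ) ^ (w - i) * sfun (e - 1 - i))
            - 2 * sfun (e - w) := by
        have hL := Finset.sum_range_succ' (fun i => (2:ℤ) ^ (w - i) * sfun (e - i)) (w-1)
        rw [hrange] at hL
        have hR := Finset.sum_range_succ (fun i => (2:ℤ) ^ (w - i) * sfun (e - 1 - i)) (w-1)
        rw [hrange] at hR
        rw [hL, hR]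
        have hmatch : ∀ i ∈ Finset.range (w-1),
            2 * ((2:ℤ) ^ (w - (i+1)) * sfun (e - (i+1)))
              = (2:ℤ) ^ (w - i) * sfun (e - 1 - i) := by
          intro i hi
          simp only [Finset.mem_range] at hi
          have hp : (2:ℤ) ^ (w - i) = 2 * 2 ^ (w - (i+1)) := by
            rw [← pow_succ']
            congr 1
            omega
          have hs2 : e - 1 - i = e - (i+1) := by omega
          rw [hp, hs2]
          ring
        rw [mul_add, Finset.mul_sum, Finset.sum_congr rfl hmatch]
        have hpw : w - (w-1) = 1 := by omega
        have hsw : e - 1 - (w - 1) = e - w := by omega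
        rw [hpw, hsw, pow_one]
        have hn2 : (2:ℤ) ^ n = 2 * 2 ^ w := by rw [hn]; ring
        rw [hn2]
        simp only [Nat.sub_zero]
        ring
      rw [hE2w] at E2
      linarith [E1, E2, hQ, hBs]
    have chain : ∀ e, e ≤ a → ∃ j : ℕ, e ≤ j * n ∧ j * n < e + n ∧
        (q : ℤ) = 2 ^ (j * n) * ((2 ^ n - 1) * sfun e + 1) := by
      intro e
      induction e using Nat.strong_induction_on with
      | _ e ih =>
        intro he
        rcases Nat.eq_zero_or_pos e with rfl | hpos
        · refine ⟨0, by omega, by omega, ?_⟩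
          have E0 := Eqe 0 (by omega)
          have hq00 : ((q / 2 ^ 0 : ℕ) : ℤ) = (q:ℤ) := by norm_num
          have hgeo : ∑ i ∈ Finset.range w, (2:ℤ) ^ (w - i) * sfun (0 - i)
              = (2 ^ (w+1) - 2) * sfun 0 := by
            have hc : ∀ i ∈ Finset.range w, (2:ℤ) ^ (w - i) * sfun (0 - i)
                = 2 ^ (w - i) * sfun 0 := by
              intro i _
              rw [Nat.zero_sub]
            rw [Finset.sum_congr rfl hc, ← Finset.sum_mul, SplitAux.geom_aux w]
          rw [hq00, hgeo, show (0:ℕ) - w = 0 from by omega] at E0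
          rw [Nat.zero_mul, pow_zero, one_mul, show (2:ℤ)^n = 2^(w+1) from by rw [hn]]
          linear_combination E0
        · obtain ⟨j', hj1, hj2, hj3⟩ := ih (e - n) (by omega) (by omega)
          have hR := Rrec e hpos he
          have hexp : (j' + 1) * n = j' * n + n := by ring
          have hj'bound : e < n → j' = 0 := by
            intro hc
            have h0 : e - n = 0 := by omega
            rw [h0] at hj2
            by_contra hne
            have h1' : 1 ≤ j' := by omega
            have := Nat.mul_le_mul_right n h1'
            omega
          refine ⟨j' + 1, ?_, ?_, ?_⟩
          · rcases le_or_gt n e with hc | hc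
            · omega
            · have hz := hj'bound hc
              subst hz
              omega
          · rcases le_or_gt n e with hc | hc
            · omega
            · have hz := hj'bound hc
              subst hz
              omega
          · rw [hj3, hR]
            have hp2 : (2:ℤ) ^ ((j'+1) * n) = 2 ^ (j' * n) * 2 ^ n := by
              rw [← pow_add]
              congr 1
            rw [hp2]
            ring
    obtain ⟨j, hj1, hj2, hj3⟩ := chain a (le_refl a)
    have hsfa_nn : 0 ≤ sfun a := by simp only [hsfun]; positivity
    have h2n : (2:ℤ) ≤ 2 ^ n := by
      calc (2:ℤ) = 2 ^ 1 := (pow_one 2).symm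
      _ ≤ 2 ^ n := pow_le_pow_right₀ (by norm_num) (by omega)
    have hdvd2 : (2 ^ (j * n) : ℕ) ∣ q := by
      have hzd : ((2 ^ (j*n) : ℕ) : ℤ) ∣ (q:ℤ) := by
        push_cast
        exact Dvd.intro _ hj3.symm
      exact_mod_cast hzd
    have hcop : Nat.Coprime (2 ^ (j*n)) b :=
      Nat.Coprime.pow_left _ ((Nat.Prime.coprime_iff_not_dvd Nat.prime_two).mpr hbodd)
    have hdvd3 : (2:ℕ) ^ (j*n) ∣ 2 ^ a := by
      apply hcop.dvd_of_dvd_mul_right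
      rw [hab]
      exact hdvd2
    have hjna : j * n ≤ a := (Nat.pow_dvd_pow_iff_le_right (by norm_num)).mp hdvd3
    have hjaeq : j * n = a := le_antisymm hjna hj1
    have hjpos : 1 ≤ j := by
      by_contra hcon
      push_neg at hcon
      have hj0 : j = 0 := by omega
      rw [hj0, Nat.zero_mul] at hjaeq
      omega
    have hbX : (b:ℤ) = (2 ^ n - 1) * sfun a + 1 := by
      have hq' : (q:ℤ) = 2 ^ a * (b:ℤ) := by exact_mod_cast hab.symm
      have hj3' := hj3
      rw [hjaeq] at hj3'
      have hcomb := hq'.symm.trans hj3'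
      exact mul_left_cancel₀ (by positivity) hcomb
    -- sfun (a - w) = sfun a
    obtain ⟨j₂, hk1, hk2, hk3⟩ := chain (a - w) (by omega)
    have hna : n ≤ a := by
      calc n = 1 * n := (one_mul n).symm
      _ ≤ j * n := Nat.mul_le_mul_right n hjpos
      _ = a := hjaeq
    have hj₂ : j₂ = j := by
      have hsub : (j - 1) * n = j * n - n := by rw [Nat.sub_mul, one_mul]
      have hb1 : j₂ * n ≤ j * n := by omega
      have hb2 : (j-1) * n < j₂ * n := by omega
      have hle : j₂ ≤ j := Nat.le_of_mul_le_mul_right hb1 (by omega)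
      have hlt : j - 1 < j₂ := lt_of_mul_lt_mul_right hb2 (Nat.zero_le n)
      omega
    have hsfaw : sfun (a - w) = sfun a := by
      rw [hj₂, hjaeq] at hk3
      have hj3' := hj3
      rw [hjaeq] at hj3'
      have hcomb : (2:ℤ) ^ a * ((2 ^ n - 1) * sfun a + 1)
          = 2 ^ a * ((2 ^ n - 1) * sfun (a - w) + 1) := hj3'.symm.trans hk3
      have hcc := mul_left_cancel₀ (show ((2:ℤ))^a ≠ 0 from by positivity) hcomb
      have h2n1ne : ((2:ℤ) ^ n - 1) ≠ 0 := by omega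
      have : ((2:ℤ) ^ n - 1) * sfun a = ((2:ℤ) ^ n - 1) * sfun (a - w) := by linarith
      have := mul_left_cancel₀ h2n1ne this
      omega
    have hsetEq : S'.filter (fun s : ZMod q => 2 ^ a ∣ s.val)
        = S'.filter (fun s : ZMod q => 2 ^ (a - w) ∣ s.val) := by
      apply Finset.eq_of_subset_of_card_le
      · intro s hsm
        rw [Finset.mem_filter] at hsm ⊢
        exact ⟨hsm.1, dvd_trans (pow_dvd_pow 2 (by omega)) hsm.2⟩
      · have hcst : ((S'.filter (fun s : ZMod q => 2 ^ (a-w) ∣ s.val)).card : ℤ)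
            = ((S'.filter (fun s : ZMod q => 2 ^ a ∣ s.val)).card : ℤ) := hsfaw
        omega
    -- the odd-part subgroup
    set K : AddSubgroup (ZMod q) :=
      { carrier := {x : ZMod q | 2 ^ a ∣ x.val}
        zero_mem' := by
          simp only [Set.mem_setOf_eq, ZMod.val_zero]
          exact dvd_zero _
        add_mem' := by
          intro x y hx hy
          exact SplitAux.val_add_dvd (hdvdq a (le_refl a)) hx hy
        neg_mem' := by
          intro x hx
          exact SplitAux.val_neg_dvd (hdvdq a (le_refl a)) hx } with hK
    have hKmem : ∀ x : ZMod q, x ∈ K ↔ 2 ^ a ∣ x.val := fun x => Iff.rfl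
    set SK : Set K := {y : K | (y : ZMod q) ∈ S} with hSK
    have hcoe_smul : ∀ (m : ℤ) (y : K), ((m • y : K) : ZMod q) = m • (y : ZMod q) :=
      fun m y => rfl
    have hsplitK : Splits (SplitAux.MSet w) SK := by
      refine ⟨?_, ?_, ?_⟩
      · rintro ⟨m, y⟩ hmem2
        have hm : m ∈ SplitAux.MSet w := hmem2.1
        have hy : (y : ZMod q) ∈ S := hmem2.2
        show m • y ≠ 0
        intro h0
        have hcc : m • (y : ZMod q) = 0 := by
          rw [← hcoe_smul, h0]
          rfl
        have hne := hsp.mapsTo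
          (show ((m, (y : ZMod q)) : ℤ × ZMod q) ∈ (SplitAux.MSet w) ×ˢ S from
            Set.mem_prod.mpr ⟨hm, hy⟩)
        exact hne hcc
      · rintro ⟨m1, y1⟩ h1 ⟨m2, y2⟩ h2 heq
        have heq' : m1 • (y1 : ZMod q) = m2 • (y2 : ZMod q) :=
          congrArg (fun z : K => (z : ZMod q)) heq
        have hy1S : (y1 : ZMod q) ∈ S := h1.2
        have hy2S : (y2 : ZMod q) ∈ S := h2.2
        have hres := hsp.injOn
          (show ((m1, (y1 : ZMod q)) : ℤ × ZMod q) ∈ (SplitAux.MSet w) ×ˢ S from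
            Set.mem_prod.mpr ⟨h1.1, hy1S⟩)
          (show ((m2, (y2 : ZMod q)) : ℤ × ZMod q) ∈ (SplitAux.MSet w) ×ˢ S from
            Set.mem_prod.mpr ⟨h2.1, hy2S⟩) heq'
        have hmm : m1 = m2 := congrArg Prod.fst hres
        have hyy : (y1 : ZMod q) = (y2 : ZMod q) := congrArg Prod.snd hres
        rw [Prod.mk.injEq]
        exact ⟨hmm, Subtype.ext hyy⟩
      · intro x hx
        have hxne : (x : ZMod q) ≠ 0 := by
          intro h0
          exact hx (Subtype.ext h0)
        obtain ⟨p, hp, hpe⟩ := hsp.surjOn (show (x:ZMod q) ∈ {g : ZMod q | g ≠ 0} from hxne)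
        have hm := hp.1
        have hs2 : p.2 ∈ S := hp.2
        obtain ⟨hml, hmh, hmne⟩ := hm
        have hdvdx : (2:ℕ) ^ a ∣ (p.1 • p.2).val := by
          rw [show p.1 • p.2 = (x : ZMod q) from hpe]
          exact x.2
        have hdvd_ms : (2:ℤ) ^ a ∣ p.1 * ((p.2).val : ℤ) :=
          (SplitAux.mem_H_iff (hdvdq a (le_refl a)) p.1 p.2).mp hdvdx
        have hnab : p.1.natAbs ≤ 2 ^ w := by
          have hnn : (p.1.natAbs : ℤ) ≤ (2:ℤ) ^ w := by
            rcases Int.natAbs_eq p.1 with hh | hh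
            · omega
            · omega
          have hcast : ((2:ℕ) ^ w : ℤ) = (2:ℤ) ^ w := by push_cast; ring
          rw [← hcast] at hnn
          exact_mod_cast hnn
        have hsv : (2:ℤ) ^ (a - w) ∣ ((p.2).val : ℤ) :=
          SplitAux.pow2_cancel_bound hmne hnab hdvd_ms
        have hsvn : (2:ℕ) ^ (a - w) ∣ (p.2).val := by
          have hcast : ((2:ℕ) ^ (a-w) : ℤ) = (2:ℤ) ^ (a-w) := by push_cast; ring
          rw [← hcast] at hsv
          exact_mod_cast hsv
        have hsmem' : p.2 ∈ S'.filter (fun s : ZMod q => 2 ^ (a-w) ∣ s.val) :=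
          Finset.mem_filter.mpr ⟨(hS' _).mpr hs2, hsvn⟩
        rw [← hsetEq] at hsmem'
        have hsK : (2:ℕ) ^ a ∣ (p.2).val := (Finset.mem_filter.mp hsmem').2
        refine ⟨(p.1, ⟨p.2, hsK⟩), Set.mem_prod.mpr ⟨hp.1, show (⟨p.2, hsK⟩ : K) ∈ SK from hs2⟩, ?_⟩
        apply Subtype.ext
        show ((p.1 • (⟨p.2, hsK⟩ : K) : K) : ZMod q) = (x : ZMod q)
        rw [hcoe_smul]
        exact hpe
    have hKinj : ∀ y : K, y + y = 0 → y = 0 := by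
      intro y hyy
      have hcoe : (y : ZMod q) + (y : ZMod q) = 0 :=
        congrArg (fun z : K => (z : ZMod q)) hyy
      have hv : ((y : ZMod q).val + (y : ZMod q).val) % q = 0 := by
        rw [← ZMod.val_add, hcoe, ZMod.val_zero]
      have hdv : q ∣ 2 * (y : ZMod q).val := by
        have h1 := Nat.dvd_of_mod_eq_zero hv
        rwa [show (y : ZMod q).val + (y : ZMod q).val = 2 * (y : ZMod q).val from by ring] at h1
      have hlt : (y : ZMod q).val < q := ZMod.val_lt _
      obtain ⟨c, hc⟩ := hdv
      have hc2 : c < 2 := by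
        by_contra hcon
        push_neg at hcon
        have := Nat.mul_le_mul_left q hcon
        omega
      interval_cases c
      · have hv0 : (y : ZMod q).val = 0 := by omega
        exact Subtype.ext ((ZMod.val_eq_zero _).mp hv0)
      · exfalso
        obtain ⟨t, ht⟩ := y.2
        have hq2' : 2 ^ a * b = 2 * (2 ^ a * t) := by
          rw [← ht, hc, mul_one, ← hab]
        have hbt : b = 2 * t := by
          have h2' : 2 ^ a * b = 2 ^ a * (2 * t) := by
            rw [hq2']
            ring
          exact Nat.eq_of_mul_eq_mul_left (by positivity) h2'
        exact hbodd ⟨t, hbt⟩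
    have htriv := SplitAux.odd_case hw hKinj hsplitK
    have hsfa0 : sfun a = 0 := by
      simp only [hsfun, Nat.cast_eq_zero, Finset.card_eq_zero, Finset.filter_eq_empty_iff]
      intro s hsm hdvs
      have hsS2 : s ∈ S := (hS' s).mp hsm
      have hzero := htriv ⟨s, hdvs⟩
      have hs0 : s = 0 := congrArg Subtype.val hzero
      exact hSne s hsS2 hs0
    have hb1 : b = 1 := by
      have hbb : (b:ℤ) = 1 := by
        rw [hbX, hsfa0]
        ring
      exact_mod_cast hbb
    refine ⟨j, hjpos, ?_⟩
    calc q = 2 ^ a * b := hab.symm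
    _ = 2 ^ (j * n) := by rw [hb1, hjaeq, Nat.mul_one]
end

section
/- Let M = {-1, 1, 2}. If M and some finite set S split a finite additive abelian group G with |G| > 1, then |G| = 4^ℓ and |S| = (4^ℓ - 1)/3 for some integer ℓ ≥ 1. Hence the (2,1,n)-quasi-cross admits a lattice tiling arising from a group splitting only for dimensions n = (4^ℓ - 1)/3, the parameters of the recursive construction over ℤ/4^ℓℤ. -/
open Function Finset

lemma exists_surj (G : Type*) [AddCommGroup G] [Finite G] (p : ℕ) (pp : p.Prime)
    (hd : p ∣ Nat.card G) : ∃ φ : G →+ ZMod p, Surjective φ := by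
  obtain ⟨ι, hι, n, hn, ⟨e⟩⟩ := AddCommGroup.equiv_directSum_zmod_of_finite' G
  haveI := Fact.mk pp
  let e2 := e.trans (DirectSum.addEquivProd fun i => ZMod (n i))
  have hcard : Nat.card G = ∏ i, n i := by
    rw [Nat.card_congr e2.toEquiv, Nat.card_pi]
    simp [Nat.card_zmod]
  have : ∃ i ∈ Finset.univ, p ∣ n i := by
    have := hd
    rw [hcard] at this
    exact (Nat.Prime.prime pp).exists_mem_finset_dvd this
  obtain ⟨i, _, hdi⟩ := this
  refine ⟨((ZMod.castHom hdi (ZMod p)).toAddMonoidHom.comp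
      (Pi.evalAddMonoidHom (fun j => ZMod (n j)) i)).comp e2.toAddMonoidHom, ?_⟩
  have h1 : Surjective (ZMod.castHom hdi (ZMod p)) := by
    intro y
    refine ⟨(y.val : ZMod (n i)), ?_⟩
    rw [map_natCast]
    simp [ZMod.natCast_val, ZMod.cast_id]
  have h2 : Surjective (Pi.evalAddMonoidHom (fun j => ZMod (n j)) i) := by
    classical
    intro y; exact ⟨Pi.single i y, by simp [Pi.evalAddMonoidHom]⟩
  exact (h1.comp h2).comp e2.surjective


lemma card_pairs_filter {G : Type*} [AddCommGroup G] [Fintype G] {S : Set G} (hSfin : S.Finite)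
    (hsplit : Splits ({-1, 1, 2} : Set ℤ) S) (P : G → Prop) [DecidablePred P]
    [DecidableEq G] :
    ((({-1,1,2} : Finset ℤ) ×ˢ hSfin.toFinset).filter fun q => P (q.1 • q.2)).card
      = (Finset.univ.filter fun g : G => P g ∧ g ≠ 0).card := by
  classical
  have hmem : ∀ q : ℤ × G, q ∈ (({-1,1,2} : Finset ℤ) ×ˢ hSfin.toFinset) →
      q ∈ (({-1,1,2} : Set ℤ) ×ˢ S) := by
    intro q hq
    rw [Finset.mem_product] at hq
    exact ⟨by simpa using hq.1, by simpa [Set.Finite.mem_toFinset] using hq.2⟩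
  apply Finset.card_bij (fun q _ => q.1 • q.2)
  · intro q hq
    rw [Finset.mem_filter] at hq
    rw [Finset.mem_filter]
    exact ⟨Finset.mem_univ _, hq.2, hsplit.mapsTo (hmem q hq.1)⟩
  · intro q1 h1 q2 h2 heq
    rw [Finset.mem_filter] at h1 h2
    exact hsplit.injOn (hmem q1 h1.1) (hmem q2 h2.1) heq
  · intro g hg
    rw [Finset.mem_filter] at hg
    obtain ⟨q, hq, rfl⟩ := hsplit.surjOn hg.2.2
    refine ⟨q, ?_, rfl⟩
    rw [Finset.mem_filter, Finset.mem_product]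
    exact ⟨⟨by simpa using hq.1, by simpa [Set.Finite.mem_toFinset] using hq.2⟩, hg.2.1⟩

lemma key_no_odd {G : Type*} [AddCommGroup G] [Fintype G] {S : Set G} (hSfin : S.Finite)
    (hsplit : Splits ({-1, 1, 2} : Set ℤ) S) {p : ℕ} (pp : p.Prime) (hp2 : p ≠ 2)
    (φ : G →+ ZMod p) (hφ : Surjective φ) : False := by
  classical
  haveI := Fact.mk pp
  have h2ne : (2 : ZMod p) ≠ 0 := by
    intro h
    have : ((2:ℕ) : ZMod p) = 0 := by exact_mod_cast h
    rw [ZMod.natCast_eq_zero_iff] at this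
    exact hp2 ((Nat.prime_dvd_prime_iff_eq pp Nat.prime_two).mp this)
  set T := hSfin.toFinset with hTdef
  set f : ZMod p → ℕ := fun j => (T.filter fun s => φ s = j).card with hf
  -- splitting the pair count over the three multipliers
  have split3 : ∀ r : ZMod p,
      ((({-1,1,2} : Finset ℤ) ×ˢ T).filter fun q => φ (q.1 • q.2) = r).card
        = f (-r) + (f r + f ((2:ZMod p)⁻¹ * r)) := by
    intro r
    rw [Finset.card_filter, Finset.sum_product,
      show ({-1,1,2} : Finset ℤ) = insert (-1) (insert 1 {2}) from rfl,
      Finset.sum_insert (by decide), Finset.sum_insert (by decide), Finset.sum_singleton]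
    simp only [hf, Finset.card_filter]
    congr 1
    · apply Finset.sum_congr rfl
      intro s _
      congr 1
      simp [neg_zsmul, one_zsmul, map_neg, neg_eq_iff_eq_neg]
    congr 1
    · apply Finset.sum_congr rfl
      intro s _
      congr 1
      simp [one_zsmul]
    · apply Finset.sum_congr rfl
      intro s _
      congr 1
      have : φ ((2:ℤ) • s) = 2 * φ s := by
        rw [two_zsmul, map_add, two_mul]
      rw [this]
      apply propext
      constructor
      · rintro rfl
        exact (inv_mul_cancel_left₀ h2ne _).symm
      · intro h
        rw [h, mul_inv_cancel_left₀ h2ne]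
  -- fibers of φ all have the same cardinality
  have fib_eq : ∀ r : ZMod p, (Finset.univ.filter fun g : G => φ g = r).card
      = (Finset.univ.filter fun g : G => φ g = 0).card := by
    intro r
    obtain ⟨x₀, hx₀⟩ := hφ r
    apply Finset.card_bij (fun g _ => g - x₀)
    · intro g hg
      rw [Finset.mem_filter] at hg ⊢
      simp [map_sub, hg.2, hx₀]
    · intro g1 h1 g2 h2 heq
      exact sub_left_injective heq
    · intro g hg
      rw [Finset.mem_filter] at hg
      exact ⟨g + x₀, by rw [Finset.mem_filter]; simp [map_add, hg.2, hx₀], by abel⟩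
  -- r = 0 case
  have h0 : (Finset.univ.filter fun g : G => φ g = 0).card = 3 * f 0 + 1 := by
    have h1 := card_pairs_filter hSfin hsplit (fun g => φ g = 0)
    rw [split3 0] at h1
    have h2 : (Finset.univ.filter fun g : G => φ g = 0 ∧ g ≠ 0)
        = (Finset.univ.filter fun g : G => φ g = 0).erase 0 := by
      ext g
      simp only [Finset.mem_filter, Finset.mem_erase, Finset.mem_univ, true_and]
      tauto
    rw [h2] at h1
    have h3 : (0:G) ∈ (Finset.univ.filter fun g : G => φ g = 0) := by
      simp
    have h4 := Finset.card_erase_of_mem h3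
    have h5 := Finset.card_pos.mpr ⟨(0:G), h3⟩
    simp only [neg_zero, mul_zero] at h1
    omega
  -- main equation
  have hmain : ∀ r : ZMod p, r ≠ 0 → f (-r) + (f r + f ((2:ZMod p)⁻¹ * r)) = 3 * f 0 + 1 := by
    intro r hr
    have h1 := card_pairs_filter hSfin hsplit (fun g => φ g = r)
    rw [split3 r] at h1
    have h2 : (Finset.univ.filter fun g : G => φ g = r ∧ g ≠ 0)
        = (Finset.univ.filter fun g : G => φ g = r) := by
      apply Finset.filter_congr
      intro g _
      constructor
      · exact fun h => h.1
      · intro h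
        refine ⟨h, ?_⟩
        rintro rfl
        rw [map_zero] at h
        exact hr h.symm
    rw [h2, fib_eq r, h0] at h1
    exact h1
  -- symmetry
  have hsym : ∀ x : ZMod p, x ≠ 0 → f x = f (-x) := by
    intro x hx
    have hxx : (2:ZMod p) * x ≠ 0 := mul_ne_zero h2ne hx
    have h1 := hmain ((2:ZMod p) * x) hxx
    have h2 := hmain (-((2:ZMod p) * x)) (neg_ne_zero.mpr hxx)
    rw [inv_mul_cancel_left₀ h2ne] at h1
    rw [neg_neg, mul_neg, inv_mul_cancel_left₀ h2ne] at h2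
    omega
  -- recurrence
  have hrec : ∀ x : ZMod p, x ≠ 0 → 2 * f ((2:ZMod p) * x) + f x = 3 * f 0 + 1 := by
    intro x hx
    have hxx : (2:ZMod p) * x ≠ 0 := mul_ne_zero h2ne hx
    have h1 := hmain ((2:ZMod p) * x) hxx
    rw [inv_mul_cancel_left₀ h2ne] at h1
    have h2 := hsym ((2:ZMod p) * x) hxx
    omega
  -- integer-valued deviation
  set F : ZMod p → ℤ := fun x => 3 * (f x : ℤ) - (3 * (f 0 : ℤ) + 1) with hF
  have hFrec : ∀ x : ZMod p, x ≠ 0 → F x = -2 * F ((2:ZMod p) * x) := by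
    intro x hx
    have h1 : (2:ℤ) * (f ((2:ZMod p) * x) : ℤ) + (f x : ℤ) = 3 * (f 0 : ℤ) + 1 := by
      exact_mod_cast hrec x hx
    simp only [hF]
    linarith
  have hiter : ∀ t : ℕ, F 1 = (-2)^t * F ((2:ZMod p)^t) := by
    intro t
    induction t with
    | zero => simp
    | succ t ih =>
      have hne : (2:ZMod p)^t ≠ 0 := pow_ne_zero _ h2ne
      rw [ih, hFrec _ hne, pow_succ]
      ring_nf
  have hzero : F ((2:ZMod p)^((F 1).natAbs + 1)) = 0 := by
    set t := (F 1).natAbs + 1 with ht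
    by_contra hne
    have h1 := hiter t
    have habs : (F 1).natAbs = 2^t * (F ((2:ZMod p)^t)).natAbs := by
      rw [h1, Int.natAbs_mul, Int.natAbs_pow]
      simp
    have h2 : 0 < (F ((2:ZMod p)^t)).natAbs := Int.natAbs_pos.mpr hne
    have h3 : t < 2^t := Nat.lt_two_pow_self
    have h5 : 2^t ≤ 2^t * (F ((2:ZMod p)^t)).natAbs := Nat.le_mul_of_pos_right _ h2
    omega
  have : 3 * (f ((2:ZMod p)^((F 1).natAbs + 1)) : ℤ) = 3 * (f 0 : ℤ) + 1 := by
    have := hzero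
    simp only [hF] at this
    linarith
  have hnat : 3 * f ((2:ZMod p)^((F 1).natAbs + 1)) = 3 * f 0 + 1 := by exact_mod_cast this
  omega

theorem stmt13 {G : Type*} [AddCommGroup G] [Fintype G] (hG : 1 < Fintype.card G)
    (S : Set G) (hSfin : S.Finite)
    (hsplit : Splits ({-1, 1, 2} : Set ℤ) S) :
    ∃ ℓ : ℕ, 1 ≤ ℓ ∧ Fintype.card G = 4 ^ ℓ ∧ Nat.card ↥S = (4 ^ ℓ - 1) / 3 := by
  classical
  set T := hSfin.toFinset with hTdef
  have hSn : Nat.card ↥S = T.card := by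
    rw [Nat.card_coe_set_eq, Set.ncard_eq_toFinset_card S hSfin]
  -- global count : card G = 3 * T.card + 1
  have hglob := card_pairs_filter hSfin hsplit (fun _ => True)
  simp only [Finset.filter_true_of_mem (fun _ _ => trivial), true_and] at hglob
  rw [Finset.card_product] at hglob
  have hM3 : ({-1,1,2} : Finset ℤ).card = 3 := by decide
  have hcompl : (Finset.univ.filter fun g : G => g ≠ 0).card = Fintype.card G - 1 := by
    rw [Finset.filter_ne', Finset.card_erase_of_mem (Finset.mem_univ 0), Finset.card_univ]
  have hcard : Fintype.card G = 3 * T.card + 1 := by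
    rw [hM3] at hglob
    rw [hcompl] at hglob
    have hTT : (hSfin.toFinset).card = T.card := rfl
    omega
  -- no odd prime divides card G
  have hodd : ∀ {q : ℕ}, q.Prime → q ∣ Fintype.card G → q = 2 := by
    intro q hq hdvd
    by_contra hne
    obtain ⟨φ, hφ⟩ := exists_surj G q hq (by rwa [Nat.card_eq_fintype_card])
    exact key_no_odd hSfin hsplit hq hne φ hφ
  have hpow : Fintype.card G = 2 ^ (Fintype.card G).primeFactorsList.length :=
    Nat.eq_prime_pow_of_unique_prime_dvd (by omega) hodd
  set k := (Fintype.card G).primeFactorsList.length with hk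
  rcases Nat.even_or_odd k with ⟨ℓ, hℓ⟩ | ⟨m, hm⟩
  · -- k = ℓ + ℓ
    have h4 : Fintype.card G = 4 ^ ℓ := by
      rw [hpow, hℓ, ← two_mul, pow_mul]
      norm_num
    refine ⟨ℓ, ?_, h4, ?_⟩
    · rcases Nat.eq_zero_or_pos ℓ with rfl | h
      · simp [h4] at hG
      · exact h
    · rw [hSn]
      omega
  · -- k = 2 * m + 1 : contradiction
    exfalso
    have h2 : Fintype.card G = 2 * 4 ^ m := by
      rw [hpow, hm, pow_succ, pow_mul]
      norm_num
      ring
    have h3 : 4 ^ m % 3 = 1 := by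
      rw [Nat.pow_mod]
      norm_num
    omega
end

section
/- Let k₊, k₋ be integers with 0 < k₋ < k₊ and M = [-k₋, k₊]*, let G be a finite additive abelian group, and let s₁, …, sₙ ∈ G be such that the elements m • sᵢ (m ∈ M, 1 ≤ i ≤ n) are pairwise distinct and all nonzero. Define the group homomorphism φ : ℤⁿ → G by φ(x₁, …, xₙ) = Σᵢ xᵢ • sᵢ, and let Λ = ker φ. Then the translates of the (k₊, k₋, n)-quasi-cross E by distinct elements of Λ are pairwise disjoint: for u, v ∈ Λ with u ≠ v, (u + E) ∩ (v + E) = ∅. -/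
open Pointwise

/-- The homomorphism `φ : ℤⁿ → G`, `φ(x₁, …, xₙ) = Σᵢ xᵢ • sᵢ`. -/
def phiHom {G : Type*} [AddCommGroup G] {n : ℕ} (s : Fin n → G) : (Fin n → ℤ) →+ G where
  toFun x := ∑ i, x i • s i
  map_zero' := by simp
  map_add' x y := by simp [add_smul, Finset.sum_add_distrib]

theorem stmt14 {G : Type*} [AddCommGroup G] [Fintype G]
    (kp km : ℤ) (h0 : 0 < km) (hlt : km < kp) (n : ℕ) (s : Fin n → G)
    (hne : ∀ m ∈ {m : ℤ | -km ≤ m ∧ m ≤ kp ∧ m ≠ 0}, ∀ i : Fin n, m • s i ≠ 0)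
    (hdist : ∀ m ∈ {m : ℤ | -km ≤ m ∧ m ≤ kp ∧ m ≠ 0},
      ∀ m' ∈ {m : ℤ | -km ≤ m ∧ m ≤ kp ∧ m ≠ 0},
      ∀ i i' : Fin n, m • s i = m' • s i' → m = m' ∧ i = i')
    (u v : Fin n → ℤ) (hu : u ∈ (phiHom s).ker) (hv : v ∈ (phiHom s).ker) (huv : u ≠ v) :
    (u +ᵥ quasiCross kp km n) ∩ (v +ᵥ quasiCross kp km n) = ∅ := by
  have hsingle : ∀ (i : Fin n) (m : ℤ), phiHom s (Pi.single i m) = m • s i := by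
    intro i m
    simp [phiHom, Pi.single_apply, ite_smul]
  ext x
  simp only [Set.mem_inter_iff, Set.mem_empty_iff_false, iff_false, not_and]
  intro h1 h2
  rw [Set.mem_vadd_set_iff_neg_vadd_mem] at h1 h2
  simp only [vadd_eq_add] at h1 h2
  have hu0 : phiHom s u = 0 := hu
  have hv0 : phiHom s v = 0 := hv
  have hphi : phiHom s (-u + x) = phiHom s (-v + x) := by
    simp [map_add, map_neg, hu0, hv0]
  have huv' : (-u + x : Fin n → ℤ) ≠ -v + x := by
    intro h
    exact huv (neg_injective (add_right_cancel h))
  rcases h1 with h1 | ⟨i, m, hm1, hm2, hm3, he⟩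
  · rcases h2 with h2 | ⟨i', m', hm1', hm2', hm3', he'⟩
    · exact huv' (h1.trans h2.symm)
    · apply hne m' ⟨hm1', hm2', hm3'⟩ i'
      rw [← hsingle, ← he', ← hphi, h1, map_zero]
  · rcases h2 with h2 | ⟨i', m', hm1', hm2', hm3', he'⟩
    · apply hne m ⟨hm1, hm2, hm3⟩ i
      rw [← hsingle, ← he, hphi, h2, map_zero]
    · have : m • s i = m' • s i' := by
        rw [← hsingle, ← hsingle, ← he, ← he', hphi]
      obtain ⟨rfl, rfl⟩ := hdist m ⟨hm1, hm2, hm3⟩ m' ⟨hm1', hm2', hm3'⟩ i i' this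
      exact huv' (he.trans he'.symm)
end

section
/- Let n ≥ 2, let k₊, k₋ be integers with 0 < k₋ < k₊ and M = [-k₋, k₊]*, let G be a finite additive abelian group with |G| = n(k₊ + k₋) + 1, and suppose M and S = {s₁, …, sₙ} split G. Then for every i with 2 ≤ i ≤ n there exist integers x and y with k₊ + 1 ≤ x ≤ ⌊(n(k₊ + k₋) + 1)/(k₋ + 1)⌋, |y| ≤ k₋, and x • s₁ + y • sᵢ = 0 in G. -/
theorem stmt17 {G : Type*} [AddCommGroup G] [Fintype G]
    (n : ℕ) (hn : 2 ≤ n) (kp km : ℤ) (h0 : 0 < km) (hlt : km < kp)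
    (s : Fin n → G) (hs : Function.Injective s)
    (hcard : (Fintype.card G : ℤ) = n * (kp + km) + 1)
    (hsplit : Splits {m : ℤ | -km ≤ m ∧ m ≤ kp ∧ m ≠ 0} (Set.range s))
    (i : Fin n) (hi : i ≠ ⟨0, by omega⟩) :
    ∃ x y : ℤ, kp + 1 ≤ x ∧ x ≤ ((n : ℤ) * (kp + km) + 1) / (km + 1) ∧
      |y| ≤ km ∧ x • s ⟨0, by omega⟩ + y • s i = 0 := by
  classical
  set s0 : G := s ⟨0, by omega⟩ with hs0def
  set si : G := s i with hsidef
  have hne : s0 ≠ si := by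
    intro h
    exact hi (hs h).symm
  -- basic consequences of splitting
  have hmaps : ∀ m : ℤ, -km ≤ m → m ≤ kp → m ≠ 0 → ∀ j : Fin n, m • s j ≠ 0 := by
    intro m h1 h2 h3 j
    have := hsplit.mapsTo (Set.mk_mem_prod (⟨h1, h2, h3⟩ :
      m ∈ {m : ℤ | -km ≤ m ∧ m ≤ kp ∧ m ≠ 0}) ⟨j, rfl⟩)
    exact this
  have hinjsp : ∀ m m' : ℤ, -km ≤ m → m ≤ kp → m ≠ 0 → -km ≤ m' → m' ≤ kp → m' ≠ 0 →
      ∀ j j' : Fin n, m • s j = m' • s j' → m = m' ∧ s j = s j' := by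
    intro m m' h1 h2 h3 h1' h2' h3' j j' heq
    have hmem : (m, s j) ∈ ({m : ℤ | -km ≤ m ∧ m ≤ kp ∧ m ≠ 0} ×ˢ Set.range s) :=
      Set.mk_mem_prod ⟨h1, h2, h3⟩ ⟨j, rfl⟩
    have hmem' : (m', s j') ∈ ({m : ℤ | -km ≤ m ∧ m ≤ kp ∧ m ≠ 0} ×ˢ Set.range s) :=
      Set.mk_mem_prod ⟨h1', h2', h3'⟩ ⟨j', rfl⟩
    have := hsplit.injOn hmem hmem' heq
    exact ⟨congrArg Prod.fst this, congrArg Prod.snd this⟩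
  -- the predicate and its minimal witness
  set P : ℕ → Prop := fun u => 0 < u ∧ ∃ y : ℤ, |y| ≤ km ∧ (u : ℤ) • s0 + y • si = 0 with hPdef
  have hex : ∃ u, P u := by
    refine ⟨Fintype.card G, Fintype.card_pos, 0, by simpa using h0.le, ?_⟩
    simp [natCast_zsmul, card_nsmul_eq_zero]
  set X : ℕ := Nat.find hex with hXdef
  obtain ⟨hXpos, y0, hy0, hXeq⟩ : P X := Nat.find_spec hex
  have hmin : ∀ u < X, ¬ P u := fun u hu => Nat.find_min hex hu
  -- Step 1 : kp < X
  have hkpX : kp + 1 ≤ (X : ℤ) := by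
    by_contra hcon
    push_neg at hcon
    have hXle : (X : ℤ) ≤ kp := by omega
    have hX1 : (1 : ℤ) ≤ (X : ℤ) := by exact_mod_cast hXpos
    have hXne : (X : ℤ) ≠ 0 := by omega
    have hXnk : -km ≤ (X : ℤ) := by omega
    rcases eq_or_ne y0 0 with rfl | hy0ne
    · rw [zero_zsmul, add_zero] at hXeq
      exact hmaps X hXnk hXle hXne ⟨0, by omega⟩ hXeq
    · have heq' : (X : ℤ) • s0 = (-y0) • si := by
        rw [neg_zsmul]
        linear_combination (norm := abel) hXeq
      have hb1 : -km ≤ -y0 := by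
        have := abs_le.mp hy0; omega
      have hb2 : -y0 ≤ kp := by
        have := abs_le.mp hy0; omega
      have := hinjsp X (-y0) hXnk hXle hXne hb1 hb2 (by omega) _ i heq'
      exact hne this.2
  -- Step 2 : counting
  have hcount : (km + 1) * (X : ℤ) ≤ (Fintype.card G : ℤ) := by
    set F : Finset (ℤ × ℤ) := Finset.Icc 0 km ×ˢ Finset.Ico 0 (X : ℤ) with hFdef
    have hinjF : Set.InjOn (fun p : ℤ × ℤ => p.1 • si + p.2 • s0) ↑F := by
      rintro ⟨t, u⟩ hm ⟨t', u'⟩ hm' heq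
      simp only [hFdef, Finset.coe_product, Set.mem_prod, Finset.coe_Icc, Finset.coe_Ico,
        Set.mem_Icc, Set.mem_Ico] at hm hm'
      obtain ⟨⟨ht0, htk⟩, hu0, huX⟩ := hm
      obtain ⟨⟨ht0', htk'⟩, hu0', huX'⟩ := hm'
      simp only at heq
      -- first show u = u'
      have huu : u = u' := by
        by_contra hune
        rcases lt_or_gt_of_ne hune with h | h
        · -- u < u' : (u' - u) • s0 + (t' - t) • si = 0
          have hkey : ((u' - u).toNat : ℤ) • s0 + (t' - t) • si = 0 := by
            rw [Int.toNat_of_nonneg (by omega)]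
            simp only [sub_zsmul]
            linear_combination (norm := abel) - heq
          have : P (u' - u).toNat := ⟨by omega, t' - t, by rw [abs_le]; omega, hkey⟩
          exact hmin _ (by omega) this
        · have hkey : ((u - u').toNat : ℤ) • s0 + (t - t') • si = 0 := by
            rw [Int.toNat_of_nonneg (by omega)]
            simp only [sub_zsmul]
            linear_combination (norm := abel) heq
          have : P (u - u').toNat := ⟨by omega, t - t', by rw [abs_le]; omega, hkey⟩
          exact hmin _ (by omega) this
      subst huu
      have htt : t = t' := by
        by_contra htne
        have heq2 : (t - t') • si = 0 := by
          simp only [sub_zsmul]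
          linear_combination (norm := abel) heq
        exact hmaps (t - t') (by omega) (by omega) (by omega) i heq2
      simp [htt]
    have hcardle : F.card ≤ Fintype.card G := by
      have := Finset.card_le_card_of_injOn (fun p : ℤ × ℤ => p.1 • si + p.2 • s0)
        (fun a _ => Finset.mem_univ _) hinjF
      simpa using this
    have hFcard : (F.card : ℤ) = (km + 1) * (X : ℤ) := by
      rw [hFdef, Finset.card_product, Int.card_Icc, Int.card_Ico]
      push_cast [Int.toNat_of_nonneg (by omega : (0:ℤ) ≤ km + 1 - 0),
        Int.toNat_of_nonneg (by omega : (0:ℤ) ≤ (X:ℤ) - 0)]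
      ring
    calc (km + 1) * (X : ℤ) = (F.card : ℤ) := hFcard.symm
      _ ≤ (Fintype.card G : ℤ) := by exact_mod_cast hcardle
  refine ⟨(X : ℤ), y0, hkpX, ?_, hy0, hXeq⟩
  rw [Int.le_ediv_iff_mul_le (by omega : (0:ℤ) < km + 1)]
  calc (X : ℤ) * (km + 1) = (km + 1) * (X : ℤ) := by ring
    _ ≤ (Fintype.card G : ℤ) := hcount
    _ = (n : ℤ) * (kp + km) + 1 := hcard
end
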